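/- arXiv:2507.07065 — 7 statements merged into one kernel-verified Lean document; each statement's English description precedes it below -/
import Mathlib

section
/- Let A be Hermitian and B positive definite on a finite-dimensional Hilbert space. At any γ₀ such that A - γ₀B is nonsingular, the map γ ↦ Tr[(A - γB)₊] is differentiable at γ₀ with derivative -Tr[B {A > γ₀ B}], where {A > γB} denotes the spectral projection of A - γB onto its strictly positive part. -/
open MeasureTheory Matrix
open scoped ComplexOrder
noncomputable section

/-- The positive part `(X)₊` of a Hermitian matrix, via continuous functional calculus. -/
def mposPart {n : ℕ} (X : Matrix (Fin n) (Fin n) ℂ) : Matrix (Fin n) (Fin n) ℂ :=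
  cfc (fun x : ℝ => max x 0) X

/-- The spectral projection of a Hermitian matrix onto its strictly positive part,
so that `projPos (A - γ • B)` is the projection `{A > γB}`. -/
def projPos {n : ℕ} (X : Matrix (Fin n) (Fin n) ℂ) : Matrix (Fin n) (Fin n) ℂ :=
  cfc (fun x : ℝ => if 0 < x then (1:ℝ) else 0) X

/-- The spectral projection of a Hermitian matrix onto its nonnegative part,
so that `projNonneg (γ • B - A)` is the projection `{A ≤ γB}`. -/
def projNonneg {n : ℕ} (X : Matrix (Fin n) (Fin n) ℂ) : Matrix (Fin n) (Fin n) ℂ :=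
  cfc (fun x : ℝ => if 0 ≤ x then (1:ℝ) else 0) X

/-- Matrix logarithm via functional calculus. -/
def mlog {n : ℕ} (X : Matrix (Fin n) (Fin n) ℂ) : Matrix (Fin n) (Fin n) ℂ :=
  cfc Real.log X

/-- Real matrix power via functional calculus (`Real.rpow`, so negative powers of
positive semidefinite matrices are taken on the support). -/
def mpow {n : ℕ} (X : Matrix (Fin n) (Fin n) ℂ) (a : ℝ) : Matrix (Fin n) (Fin n) ℂ :=
  cfc (fun x : ℝ => x ^ a) X

namespace AuxPP
variable {n : ℕ}

def mnegPart (X : Matrix (Fin n) (Fin n) ℂ) : Matrix (Fin n) (Fin n) ℂ :=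
  cfc (fun x : ℝ => max (-x) 0) X

lemma contOn_spec (f : ℝ → ℝ) (X : Matrix (Fin n) (Fin n) ℂ) :
    ContinuousOn f (spectrum ℝ X) := by
  rw [continuousOn_iff_continuous_restrict]
  exact continuous_of_discreteTopology

variable {X : Matrix (Fin n) (Fin n) ℂ}

lemma cfc_posSemidef (hX : X.IsHermitian) (f : ℝ → ℝ)
    (hf : ∀ x ∈ spectrum ℝ X, 0 ≤ f x) : (cfc f X).PosSemidef := by
  rw [hX.cfc_eq]
  unfold Matrix.IsHermitian.cfc
  rw [Unitary.conjStarAlgAut_apply, star_eq_conjTranspose]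
  refine (posSemidef_diagonal_iff.mpr fun i => ?_).mul_mul_conjTranspose_same _
  have := hf _ (by rw [hX.spectrum_real_eq_range_eigenvalues]; exact ⟨i, rfl⟩)
  simpa using this

lemma posPart_eq_mul (hX : X.IsHermitian) : mposPart X = X * projPos X := by
  have hsa : IsSelfAdjoint X := hX
  calc mposPart X = cfc (fun x : ℝ => x * (if 0 < x then (1:ℝ) else 0)) X := by
        refine (cfc_congr fun x _ => ?_).symm
        rcases lt_trichotomy x 0 with h|h|h
        · simp [not_lt.mpr (le_of_lt h), max_eq_right (le_of_lt h)]
        · simp [h]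
        · simp [h, max_eq_left (le_of_lt h)]
    _ = cfc (fun x : ℝ => x) X * cfc (fun x : ℝ => if 0 < x then (1:ℝ) else 0) X :=
        cfc_mul _ _ X (contOn_spec _ X) (contOn_spec _ X)
    _ = X * projPos X := by rw [cfc_id' ℝ X hsa]; rfl

lemma projPos_idem (hX : X.IsHermitian) : projPos X * projPos X = projPos X := by
  rw [projPos, ← cfc_mul _ _ X (contOn_spec _ X) (contOn_spec _ X)]
  exact cfc_congr fun x _ => by by_cases h : 0 < x <;> simp [h]

lemma eq_sub_negPart (hX : X.IsHermitian) : X = mposPart X - mnegPart X := by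
  have hsa : IsSelfAdjoint X := hX
  rw [mposPart, mnegPart, ← cfc_sub _ _ X (contOn_spec _ X) (contOn_spec _ X)]
  conv_lhs => rw [← cfc_id' ℝ X hsa]
  exact cfc_congr fun x _ => by rcases le_total x 0 with h|h <;>
    simp [max_def, h, not_le] <;> intro h' <;> linarith

lemma one_sub_projPos (hX : X.IsHermitian) :
    1 - projPos X = cfc (fun x : ℝ => 1 - (if 0 < x then (1:ℝ) else 0)) X := by
  have hsa : IsSelfAdjoint X := hX
  rw [projPos, cfc_sub _ _ X (contOn_spec _ X) (contOn_spec _ X), cfc_const_one ℝ X hsa]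

lemma projPos_psd (hX : X.IsHermitian) : (projPos X).PosSemidef :=
  cfc_posSemidef hX _ fun x _ => by by_cases h : 0 < x <;> simp [h]

lemma one_sub_projPos_psd (hX : X.IsHermitian) : ((1 : Matrix (Fin n) (Fin n) ℂ) - projPos X).PosSemidef := by
  rw [one_sub_projPos hX]
  exact cfc_posSemidef hX _ fun x _ => by by_cases h : 0 < x <;> simp [h]

lemma mposPart_psd (hX : X.IsHermitian) : (mposPart X).PosSemidef :=
  cfc_posSemidef hX _ fun x _ => le_max_right _ _

lemma mnegPart_psd (hX : X.IsHermitian) : (mnegPart X).PosSemidef :=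
  cfc_posSemidef hX _ fun x _ => le_max_right _ _

lemma projPos_herm (hX : X.IsHermitian) : (projPos X).IsHermitian :=
  cfc_predicate (fun x : ℝ => if 0 < x then (1:ℝ) else 0) X

lemma trace_nonneg_of_psd {M : Matrix (Fin n) (Fin n) ℂ} (hM : M.PosSemidef) :
    0 ≤ M.trace := by
  rw [Matrix.trace]
  refine Finset.sum_nonneg fun i _ => ?_
  exact hM.diag_nonneg

open scoped MatrixOrder in
lemma trace_mul_nonneg_of_psd {M N : Matrix (Fin n) (Fin n) ℂ} (hM : M.PosSemidef)
    (hN : N.PosSemidef) : 0 ≤ (M * N).trace := by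
  have h1 : M * N = M * CFC.sqrt N * CFC.sqrt N := by rw [mul_assoc, CFC.sqrt_mul_sqrt_self N hN.nonneg]
  rw [h1, Matrix.trace_mul_comm, ← mul_assoc]
  have h2 : CFC.sqrt N * M * CFC.sqrt N = (CFC.sqrt N).conjTranspose * M * CFC.sqrt N := by
    rw [(CFC.sqrt_nonneg N).posSemidef.1.eq]
  rw [h2]
  exact trace_nonneg_of_psd (hM.conjTranspose_mul_mul_same _)

lemma trace_mul_re_nonneg {M N : Matrix (Fin n) (Fin n) ℂ} (hM : M.PosSemidef)
    (hN : N.PosSemidef) : 0 ≤ ((M * N).trace).re :=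
  (Complex.le_def.mp (trace_mul_nonneg_of_psd hM hN)).1

lemma smul_one_sub_psd {B : Matrix (Fin n) (Fin n) ℂ} (hB : B.PosSemidef) :
    ((B.trace.re • 1 : Matrix (Fin n) (Fin n) ℂ) - B).PosSemidef := by
  have hsa : IsSelfAdjoint B := hB.1
  have h1 : (B.trace.re • 1 : Matrix (Fin n) (Fin n) ℂ) - B
      = cfc (fun x : ℝ => B.trace.re - x) B := by
    rw [cfc_sub _ _ B (by rw [continuousOn_iff_continuous_restrict]; exact continuous_of_discreteTopology)
      (by rw [continuousOn_iff_continuous_restrict]; exact continuous_of_discreteTopology),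
      cfc_id' ℝ B hsa, cfc_const _ B hsa, Algebra.algebraMap_eq_smul_one]
  rw [h1]
  refine cfc_posSemidef hB.1 _ fun x hx => ?_
  rw [hB.1.spectrum_real_eq_range_eigenvalues] at hx
  obtain ⟨i, rfl⟩ := hx
  have htr : B.trace.re = ∑ j, hB.1.eigenvalues j := by
    conv_lhs => rw [hB.1.spectral_theorem]
    rw [Unitary.conjStarAlgAut_apply, Matrix.trace_mul_cycle]
    rw [show (star (hB.1.eigenvectorUnitary : Matrix (Fin n) (Fin n) ℂ)) *
        (hB.1.eigenvectorUnitary : Matrix (Fin n) (Fin n) ℂ) = 1 from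
      (Unitary.mem_iff.mp hB.1.eigenvectorUnitary.2).1, Matrix.one_mul, Matrix.trace_diagonal]
    simp
  rw [htr, sub_nonneg]
  exact Finset.single_le_sum (fun j _ => hB.eigenvalues_nonneg j) (Finset.mem_univ i)

lemma trace_mul_le_trace_mul {B M : Matrix (Fin n) (Fin n) ℂ} (hB : B.PosSemidef)
    (hM : M.PosSemidef) : ((B * M).trace).re ≤ B.trace.re * M.trace.re := by
  have h := trace_mul_re_nonneg (smul_one_sub_psd hB) hM
  rw [Matrix.sub_mul, Matrix.smul_mul, Matrix.one_mul, Matrix.trace_sub, Matrix.trace_smul] at h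
  simp only [Complex.sub_re, Complex.smul_re] at h
  simpa [smul_eq_mul] using h

lemma cross_bound_aux (U V : Matrix (Fin n) (Fin n) ℂ) (t c : ℝ) :
    0 ≤ (t*t) * ((Uᴴ * U).trace).re + ((t*c) * ((Uᴴ * V).trace).re + (t*c) * ((Vᴴ * U).trace).re) +
      (c*c) * ((Vᴴ * V).trace).re := by
  have hpsd := Matrix.posSemidef_conjTranspose_mul_self (t • U + c • V)
  have h := (Complex.le_def.mp (trace_nonneg_of_psd hpsd)).1
  have hexp : (t • U + c • V)ᴴ * (t • U + c • V)
      = (t*t) • (Uᴴ * U) + ((t*c) • (Uᴴ * V) + (t*c) • (Vᴴ * U)) + (c*c) • (Vᴴ * V) := by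
    rw [conjTranspose_add, conjTranspose_smul, conjTranspose_smul, star_trivial, star_trivial]
    simp only [Matrix.add_mul, Matrix.mul_add, Matrix.smul_mul, Matrix.mul_smul, smul_smul,
      smul_add]
    rw [mul_comm c t]
    abel
  rw [hexp] at h
  simp only [Matrix.trace_add, Matrix.trace_smul, Complex.add_re, Complex.smul_re,
    smul_eq_mul, Complex.zero_re] at h ⊢
  linarith

lemma cross_bound (U V : Matrix (Fin n) (Fin n) ℂ) {r : ℝ} (hr : 0 < r) :
    |((Uᴴ * V).trace + (Vᴴ * U).trace).re| ≤
      r * ((Uᴴ * U).trace).re + r⁻¹ * ((Vᴴ * V).trace).re := by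
  set t : ℝ := Real.sqrt r with ht
  have ht0 : 0 < t := Real.sqrt_pos.mpr hr
  have htsq : t * t = r := Real.mul_self_sqrt hr.le
  have htinv : t * t⁻¹ = 1 := mul_inv_cancel₀ ht0.ne'
  have hinvsq : t⁻¹ * t⁻¹ = r⁻¹ := by rw [← mul_inv, htsq]
  rw [abs_le]
  simp only [Complex.add_re]
  constructor
  · have := cross_bound_aux U V t t⁻¹
    rw [htsq, htinv, hinvsq] at this
    linarith
  · have := cross_bound_aux U V t (-t⁻¹)
    rw [htsq, mul_neg, htinv, neg_mul_neg, hinvsq] at this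
    linarith

end AuxPP


namespace AuxPP
variable {n : ℕ} {X : Matrix (Fin n) (Fin n) ℂ}

lemma trace_mul_le_posPart (hX : X.IsHermitian) {D : Matrix (Fin n) (Fin n) ℂ}
    (hD : D.PosSemidef) (hD1 : ((1 : Matrix (Fin n) (Fin n) ℂ) - D).PosSemidef) :
    ((X * D).trace).re ≤ ((mposPart X).trace).re := by
  have hsplit : X * D = mposPart X * D - mnegPart X * D := by
    rw [← Matrix.sub_mul, ← eq_sub_negPart hX]
  have h1 : 0 ≤ ((mnegPart X * D).trace).re := trace_mul_re_nonneg (mnegPart_psd hX) hD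
  have h2 : 0 ≤ ((mposPart X * (1 - D)).trace).re :=
    trace_mul_re_nonneg (mposPart_psd hX) hD1
  rw [Matrix.mul_sub, Matrix.mul_one, Matrix.trace_sub, Complex.sub_re, sub_nonneg] at h2
  rw [hsplit, Matrix.trace_sub, Complex.sub_re]
  linarith

end AuxPP

set_option maxHeartbeats 2000000 in
open AuxPP in
/-- at any `γ₀` where `A - γ₀ B` is nonsingular, `γ ↦ Tr[(A - γB)₊]`
is differentiable with derivative `-Tr[B {A > γ₀ B}]`. -/
theorem hasDerivAt_trace_posPart {n : ℕ} (A B : Matrix (Fin n) (Fin n) ℂ)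
    (hA : A.IsHermitian) (hB : B.PosDef) (γ₀ : ℝ) (hns : IsUnit (A - γ₀ • B)) :
    HasDerivAt (fun γ : ℝ => (Matrix.trace (mposPart (A - γ • B))).re)
      (-(Matrix.trace (B * projPos (A - γ₀ • B))).re) γ₀ := by
  classical
  have hBh : B.IsHermitian := hB.1
  have hBpsd : B.PosSemidef := hB.posSemidef
  have hXh : ∀ γ : ℝ, (A - γ • B).IsHermitian := by
    intro γ
    refine hA.sub ?_
    unfold Matrix.IsHermitian
    rw [conjTranspose_smul, star_trivial, hBh.eq]
  set X₀ := A - γ₀ • B with hX₀def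
  have hX₀h : X₀.IsHermitian := hXh γ₀
  set P := projPos X₀ with hPdef
  set F : ℝ → ℝ := fun γ => (Matrix.trace (mposPart (A - γ • B))).re with hFdef
  set sP : ℝ := ((B * P).trace).re with hsPdef
  have hPpsd : P.PosSemidef := projPos_psd hX₀h
  have hQpsd : ((1 : Matrix (Fin n) (Fin n) ℂ) - P).PosSemidef := one_sub_projPos_psd hX₀h
  have hPherm : P.IsHermitian := hPpsd.1
  have hQherm : ((1 : Matrix (Fin n) (Fin n) ℂ) - P).IsHermitian := hQpsd.1
  have hP2 : P * P = P := projPos_idem hX₀h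
  set Q : Matrix (Fin n) (Fin n) ℂ := 1 - P with hQdef
  have hQ2 : Q * Q = Q := by
    rw [hQdef, Matrix.sub_mul, Matrix.one_mul, Matrix.mul_sub, Matrix.mul_one, hP2, sub_self,
      sub_zero]
  have hQP : Q * P = 0 := by rw [hQdef, Matrix.sub_mul, Matrix.one_mul, hP2, sub_self]
  have hPQ : P * Q = 0 := by rw [hQdef, Matrix.mul_sub, Matrix.mul_one, hP2, sub_self]
  -- nonnegative constants
  set β : ℝ := B.trace.re with hβdef
  have hβ0 : 0 ≤ β := (Complex.le_def.mp (trace_nonneg_of_psd hBpsd)).1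
  have hBBpsd : (B * B).PosSemidef := by
    have h := Matrix.posSemidef_conjTranspose_mul_self B
    rwa [hBh.eq] at h
  set β₂ : ℝ := ((B * B).trace).re with hβ₂def
  have hβ₂0 : 0 ≤ β₂ := (Complex.le_def.mp (trace_nonneg_of_psd hBBpsd)).1
  -- the spectral gap δ
  have h0spec : (0 : ℝ) ∉ spectrum ℝ X₀ := (spectrum.zero_notMem_iff ℝ).mpr hns
  have hfin : (spectrum ℝ X₀).Finite := Matrix.finite_real_spectrum
  set T : Finset ℝ := insert (1 : ℝ) (hfin.toFinset.image fun x => |x|) with hTdef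
  have hTne : T.Nonempty := ⟨1, Finset.mem_insert_self _ _⟩
  set δ : ℝ := T.min' hTne with hδdef
  have hδ_le : ∀ x ∈ spectrum ℝ X₀, δ ≤ |x| := fun x hx =>
    Finset.min'_le _ _ (Finset.mem_insert_of_mem
      (Finset.mem_image_of_mem _ (hfin.mem_toFinset.mpr hx)))
  have hδpos : 0 < δ := by
    have hmem := T.min'_mem hTne
    rcases Finset.mem_insert.mp hmem with h | h
    · show 0 < T.min' hTne
      rw [h]; exact one_pos
    · obtain ⟨x, hx, hxe⟩ := Finset.mem_image.mp h
      have hx0 : x ≠ 0 := fun hc => h0spec (hc ▸ hfin.mem_toFinset.mp hx)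
      show 0 < T.min' hTne
      rw [← hxe]; exact abs_pos.mpr hx0
  -- δ-gap PSD matrices
  have hδP : (mposPart X₀ - δ • P).PosSemidef := by
    have heq : mposPart X₀ - δ • P
        = cfc (fun x : ℝ => max x 0 - δ * (if 0 < x then (1:ℝ) else 0)) X₀ := by
      rw [cfc_sub _ _ X₀ (contOn_spec _ _) (contOn_spec _ _),
        cfc_const_mul _ _ X₀ (contOn_spec _ _)]
      rfl
    rw [heq]
    refine cfc_posSemidef hX₀h _ fun x hx => ?_
    by_cases hxp : 0 < x
    · have := hδ_le x hx
      rw [abs_of_pos hxp] at this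
      simp only [hxp, if_true, mul_one, max_eq_left hxp.le, sub_nonneg]
      exact this
    · simp [hxp, max_eq_right (not_lt.mp hxp)]
  have hδQ : (mnegPart X₀ - δ • Q).PosSemidef := by
    have heq : cfc (fun x : ℝ => max (-x) 0 - δ * (1 - (if 0 < x then (1:ℝ) else 0))) X₀
        = mnegPart X₀ - δ • Q := by
      rw [cfc_sub _ _ X₀ (contOn_spec _ _) (contOn_spec _ _),
        cfc_const_mul _ _ X₀ (contOn_spec _ _), ← one_sub_projPos hX₀h]
      rfl
    rw [← heq]
    refine cfc_posSemidef hX₀h _ fun x hx => ?_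
    by_cases hxp : 0 < x
    · simp [hxp]
    · have hx0 : x ≠ 0 := fun hc => h0spec (hc ▸ hx)
      have hxneg : x < 0 := lt_of_le_of_ne (not_lt.mp hxp) hx0
      have hle : δ ≤ -x := by rw [← abs_of_neg hxneg]; exact hδ_le x hx
      simp only [hxp, if_false, sub_zero, mul_one, sub_nonneg,
        max_eq_left (neg_nonneg.mpr hxneg.le)]
      exact hle
  -- the key two-sided estimate
  have key : ∀ γ : ℝ, |γ - γ₀| ≤ δ / (2 * (β + 1)) →
      0 ≤ F γ - (F γ₀ - (γ - γ₀) * sP) ∧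
        F γ - (F γ₀ - (γ - γ₀) * sP) ≤ (2 * β₂ / δ) * (γ - γ₀) ^ 2 := by
    intro γ hγcl
    set ε : ℝ := γ - γ₀ with hεdef
    set X : Matrix (Fin n) (Fin n) ℂ := A - γ • B with hXdef
    have hXHer : X.IsHermitian := hXh γ
    set C : Matrix (Fin n) (Fin n) ℂ := projPos X with hCdef
    have hCpsd : C.PosSemidef := projPos_psd hXHer
    have hC1psd : ((1 : Matrix (Fin n) (Fin n) ℂ) - C).PosSemidef := one_sub_projPos_psd hXHer
    have hCherm : C.IsHermitian := hCpsd.1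
    have hC2 : C * C = C := projPos_idem hXHer
    have hXdec : X = X₀ - ε • B := by
      rw [hXdef, hX₀def, hεdef, sub_smul]
      abel
    have tracelin : ∀ D : Matrix (Fin n) (Fin n) ℂ,
        ((X * D).trace).re = ((X₀ * D).trace).re - ε * ((B * D).trace).re := by
      intro D
      rw [hXdec, Matrix.sub_mul, Matrix.smul_mul, Matrix.trace_sub, Matrix.trace_smul,
        Complex.sub_re, Complex.smul_re, smul_eq_mul]
    have hFγeq : F γ = ((X * C).trace).re := by
      show ((mposPart (A - γ • B)).trace).re = _
      rw [← hXdef, posPart_eq_mul hXHer, ← hCdef]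
    have hF0eq : F γ₀ = ((X₀ * P).trace).re := by
      show ((mposPart (A - γ₀ • B)).trace).re = _
      rw [← hX₀def, posPart_eq_mul hX₀h, ← hPdef]
    have hF0eq' : F γ₀ = ((mposPart X₀).trace).re := by
      show ((mposPart (A - γ₀ • B)).trace).re = _
      rw [← hX₀def]
    constructor
    · -- lower bound
      have h := trace_mul_le_posPart hXHer hPpsd hQpsd
      have hFγ' : F γ = ((mposPart X).trace).re := by
        show ((mposPart (A - γ • B)).trace).re = _
        rw [← hXdef]
      rw [tracelin P] at h
      rw [hFγ', hF0eq, hsPdef]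
      linarith
    · -- upper bound
      set d₁ : ℝ := ((P * (1 - C)).trace).re with hd₁def
      set d₂ : ℝ := ((Q * C).trace).re with hd₂def
      have hd₁0 : 0 ≤ d₁ := trace_mul_re_nonneg hPpsd hC1psd
      have hd₂0 : 0 ≤ d₂ := trace_mul_re_nonneg hQpsd hCpsd
      -- the spectral-gap estimate at γ₀
      have hgap : ((X₀ * C).trace).re ≤ F γ₀ - δ * (d₁ + d₂) := by
        have hsplit : ((X₀ * C).trace).re
            = ((mposPart X₀ * C).trace).re - ((mnegPart X₀ * C).trace).re := by
          conv_lhs => rw [eq_sub_negPart hX₀h]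
          rw [Matrix.sub_mul, Matrix.trace_sub, Complex.sub_re]
        have ha1 : ((mposPart X₀ * C).trace).re ≤ F γ₀ - δ * d₁ := by
          have e2 : 0 ≤ (((mposPart X₀ - δ • P) * (1 - C)).trace).re :=
            trace_mul_re_nonneg hδP hC1psd
          rw [Matrix.sub_mul, Matrix.smul_mul, Matrix.trace_sub, Matrix.trace_smul,
            Complex.sub_re, Complex.smul_re, smul_eq_mul, sub_nonneg] at e2
          have e3 : ((P * (1 - C)).trace).re = d₁ := rfl
          have e4 : ((mposPart X₀ * (1 - C)).trace).re
              = ((mposPart X₀).trace).re - ((mposPart X₀ * C).trace).re := by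
            rw [Matrix.mul_sub, Matrix.mul_one, Matrix.trace_sub, Complex.sub_re]
          rw [hF0eq']
          linarith
        have ha2 : δ * d₂ ≤ ((mnegPart X₀ * C).trace).re := by
          have e2 : 0 ≤ (((mnegPart X₀ - δ • Q) * C).trace).re :=
            trace_mul_re_nonneg hδQ hCpsd
          rw [Matrix.sub_mul, Matrix.smul_mul, Matrix.trace_sub, Matrix.trace_smul,
            Complex.sub_re, Complex.smul_re, smul_eq_mul, sub_nonneg] at e2
          exact e2
        rw [hsplit]
        linarith
      -- block decomposition of B * (P - C)
      set U : Matrix (Fin n) (Fin n) ℂ := Q * (B * P) with hUdef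
      set V : Matrix (Fin n) (Fin n) ℂ := Q * (C * P) with hVdef
      have hUconj : Uᴴ = P * (B * Q) := by
        rw [hUdef]
        simp only [conjTranspose_mul, hPherm.eq, hBh.eq, hQherm.eq, Matrix.mul_assoc]
      have hVconj : Vᴴ = P * (C * Q) := by
        rw [hVdef]
        simp only [conjTranspose_mul, hPherm.eq, hCherm.eq, hQherm.eq, Matrix.mul_assoc]
      have hQQ : ∀ M : Matrix (Fin n) (Fin n) ℂ, Q * (Q * M) = Q * M := fun M => by
        rw [← Matrix.mul_assoc, hQ2]
      have hI1 : (Uᴴ * V).trace = (B * (Q * (C * P))).trace := by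
        rw [hUconj, hVdef]
        simp only [Matrix.mul_assoc]
        rw [hQQ, Matrix.trace_mul_comm]
        simp only [Matrix.mul_assoc]
        rw [hP2]
      have hI2 : (Vᴴ * U).trace = (B * (P * (C * Q))).trace := by
        rw [hVconj, hUdef]
        simp only [Matrix.mul_assoc]
        rw [hQQ, Matrix.trace_mul_comm]
        simp only [Matrix.mul_assoc]
        rw [hP2]
        rw [show C * (Q * (B * P)) = (C * Q) * (B * P) from by simp only [Matrix.mul_assoc],
          Matrix.trace_mul_comm]
        simp only [Matrix.mul_assoc]
      have hPC : P - C = P * ((1 - C) * P) - Q * (C * Q) - (Q * (C * P) + P * (C * Q)) := by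
        have e : P * ((1 - C) * P) = P - P * (C * P) := by
          rw [Matrix.sub_mul, Matrix.one_mul, Matrix.mul_sub, ← Matrix.mul_assoc, hP2]
        rw [e, hQdef]
        noncomm_ring
      have hTdec : ((B * (P - C)).trace).re
          = ((B * (P * ((1 - C) * P))).trace).re - ((B * (Q * (C * Q))).trace).re
            - ((Uᴴ * V).trace + (Vᴴ * U).trace).re := by
        rw [hI1, hI2, hPC]
        rw [Matrix.mul_sub, Matrix.mul_sub, Matrix.mul_add, Matrix.trace_sub, Matrix.trace_sub,
          Matrix.trace_add]
        simp [Complex.sub_re, Complex.add_re]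
      -- bounds for the diagonal blocks
      have hM₁psd : (P * ((1 - C) * P)).PosSemidef := by
        have h := hC1psd.conjTranspose_mul_mul_same (B := P)
        rwa [hPherm.eq, Matrix.mul_assoc] at h
      have hM₄psd : (Q * (C * Q)).PosSemidef := by
        have h := hCpsd.conjTranspose_mul_mul_same (B := Q)
        rwa [hQherm.eq, Matrix.mul_assoc] at h
      have htrM₁ : ((P * ((1 - C) * P)).trace).re = d₁ := by
        rw [Matrix.trace_mul_comm]
        simp only [Matrix.mul_assoc]
        rw [hP2, Matrix.trace_mul_comm]
      have htrM₄ : ((Q * (C * Q)).trace).re = d₂ := by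
        rw [Matrix.trace_mul_comm]
        simp only [Matrix.mul_assoc]
        rw [hQ2, Matrix.trace_mul_comm]
      have hb₁ : ((B * (P * ((1 - C) * P))).trace).re ≤ β * d₁ := by
        have h := trace_mul_le_trace_mul hBpsd hM₁psd
        rw [htrM₁] at h
        exact h
      have hb₁0 : 0 ≤ ((B * (P * ((1 - C) * P))).trace).re :=
        trace_mul_re_nonneg hBpsd hM₁psd
      have hb₄ : ((B * (Q * (C * Q))).trace).re ≤ β * d₂ := by
        have h := trace_mul_le_trace_mul hBpsd hM₄psd
        rw [htrM₄] at h
        exact h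
      have hb₄0 : 0 ≤ ((B * (Q * (C * Q))).trace).re :=
        trace_mul_re_nonneg hBpsd hM₄psd
      -- bounds for the Gram traces
      have hPQ1 : P + Q = 1 := by rw [hQdef]; abel
      have hu : ((Uᴴ * U).trace).re ≤ β₂ := by
        have hUU : (Uᴴ * U).trace = (B * (Q * (B * P))).trace := by
          rw [hUconj, hUdef]
          simp only [Matrix.mul_assoc]
          rw [hQQ, Matrix.trace_mul_comm]
          simp only [Matrix.mul_assoc]
          rw [hP2]
        have hQBQpsd : (Q * (B * Q)).PosSemidef := by
          have h := hBpsd.conjTranspose_mul_mul_same (B := Q)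
          rwa [hQherm.eq, Matrix.mul_assoc] at h
        have hsum1 : (B * (Q * (B * P))).trace + (B * (Q * (B * Q))).trace
            = (B * (Q * B)).trace := by
          rw [← Matrix.trace_add, ← Matrix.mul_add, ← Matrix.mul_add, ← Matrix.mul_add,
            hPQ1, Matrix.mul_one]
        have hpos1 : 0 ≤ ((B * (Q * (B * Q))).trace).re :=
          trace_mul_re_nonneg hBpsd hQBQpsd
        have hsum2 : (P * (B * B)).trace + (Q * (B * B)).trace = (B * B).trace := by
          rw [← Matrix.trace_add, ← Matrix.add_mul, hPQ1, Matrix.one_mul]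
        have hpos2 : 0 ≤ ((P * (B * B)).trace).re := trace_mul_re_nonneg hPpsd hBBpsd
        have hQB : (B * (Q * B)).trace = (Q * (B * B)).trace := by
          rw [Matrix.trace_mul_comm]
          simp only [Matrix.mul_assoc]
        have e1 := congrArg Complex.re hsum1
        have e2 := congrArg Complex.re hsum2
        simp only [Complex.add_re] at e1 e2
        rw [hUU]
        rw [hQB] at e1
        rw [hβ₂def]
        linarith
      have hv : ((Vᴴ * V).trace).re ≤ d₂ := by
        have hVV : (Vᴴ * V).trace = (C * (Q * (C * P))).trace := by
          rw [hVconj, hVdef]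
          simp only [Matrix.mul_assoc]
          rw [hQQ, Matrix.trace_mul_comm]
          simp only [Matrix.mul_assoc]
          rw [hP2]
        have hQCQpsd : (Q * (C * Q)).PosSemidef := hM₄psd
        have hsum1 : (C * (Q * (C * P))).trace + (C * (Q * (C * Q))).trace
            = (C * (Q * C)).trace := by
          rw [← Matrix.trace_add, ← Matrix.mul_add, ← Matrix.mul_add, ← Matrix.mul_add,
            hPQ1, Matrix.mul_one]
        have hpos1 : 0 ≤ ((C * (Q * (C * Q))).trace).re :=
          trace_mul_re_nonneg hCpsd hQCQpsd
        have hCQC : (C * (Q * C)).trace = (Q * C).trace := by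
          rw [Matrix.trace_mul_comm]
          simp only [Matrix.mul_assoc]
          rw [hC2]
        have e1 := congrArg Complex.re hsum1
        simp only [Complex.add_re] at e1
        rw [hVV]
        rw [hCQC] at e1
        rw [hd₂def]
        linarith
      -- putting the upper bound together
      have hFγ2 : F γ = ((X₀ * C).trace).re - ε * ((B * C).trace).re := by
        rw [hFγeq, tracelin C]
      have hTT : sP - ((B * C).trace).re = ((B * (P - C)).trace).re := by
        rw [Matrix.mul_sub, Matrix.trace_sub, Complex.sub_re, hsPdef]
      rcases eq_or_ne ε 0 with hε0 | hε0
      · rw [hε0]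
        have hγγ₀ : γ = γ₀ := by
          have := hεdef ▸ hε0
          linarith [sub_eq_zero.mp this]
        rw [hγγ₀]
        simp
      · -- ε ≠ 0
        set a : ℝ := |ε| with hadef
        have ha0 : 0 < a := abs_pos.mpr hε0
        set r : ℝ := 2 * a / δ with hrdef
        have hr0 : 0 < r := by positivity
        have hrinv : r⁻¹ = δ / (2 * a) := by
          rw [hrdef]
          field_simp
        have hS := cross_bound U V hr0
        have hS2 : |((Uᴴ * V).trace + (Vᴴ * U).trace).re| ≤ r * β₂ + r⁻¹ * d₂ := by
          refine hS.trans ?_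
          have h1 : r * ((Uᴴ * U).trace).re ≤ r * β₂ := mul_le_mul_of_nonneg_left hu hr0.le
          have h2 : r⁻¹ * ((Vᴴ * V).trace).re ≤ r⁻¹ * d₂ :=
            mul_le_mul_of_nonneg_left hv (inv_nonneg.mpr hr0.le)
          linarith
        -- |T| bound
        have hTabs : |((B * (P - C)).trace).re| ≤ β * d₁ + β * d₂ + (r * β₂ + r⁻¹ * d₂) := by
          rw [hTdec, abs_le]
          have habs := abs_le.mp hS2
          constructor <;> linarith [hb₁, hb₁0, hb₄, hb₄0, habs.1, habs.2]
        have hεT : ε * (sP - ((B * C).trace).re)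
            ≤ a * (β * d₁ + β * d₂ + (r * β₂ + r⁻¹ * d₂)) := by
          rw [hTT]
          calc ε * ((B * (P - C)).trace).re ≤ |ε * ((B * (P - C)).trace).re| := le_abs_self _
            _ = a * |((B * (P - C)).trace).re| := by rw [abs_mul]
            _ ≤ a * (β * d₁ + β * d₂ + (r * β₂ + r⁻¹ * d₂)) :=
                mul_le_mul_of_nonneg_left hTabs ha0.le
        -- numeric assembly
        have haβ : a * β ≤ δ / 2 := by
          have h1 : a * (β + 1) ≤ δ / 2 := by
            calc a * (β + 1) ≤ (δ / (2 * (β + 1))) * (β + 1) :=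
                  mul_le_mul_of_nonneg_right hγcl (by linarith)
              _ = δ / 2 := by field_simp
          linarith [h1, ha0.le]
        have hay : a * a = ε ^ 2 := by rw [hadef, abs_mul_abs_self, sq]
        have har2 : a * (r * β₂) = 2 * β₂ / δ * ε ^ 2 := by
          rw [hrdef, ← hay]
          field_simp
        have hari : a * (r⁻¹ * d₂) = δ / 2 * d₂ := by
          rw [hrinv]
          field_simp
        have haβd : a * (β * d₁ + β * d₂) ≤ δ / 2 * (d₁ + d₂) := by
          have h := mul_le_mul_of_nonneg_right haβ (by linarith : (0:ℝ) ≤ d₁ + d₂)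
          linarith [h]
        have esplit : a * (β * d₁ + β * d₂ + (r * β₂ + r⁻¹ * d₂))
            = a * (β * d₁ + β * d₂) + a * (r * β₂) + a * (r⁻¹ * d₂) := by ring
        rw [esplit, har2, hari] at hεT
        have emul : ε * (sP - ((B * C).trace).re) = ε * sP - ε * ((B * C).trace).re := by ring
        rw [emul] at hεT
        have hδd₁ : 0 ≤ δ * d₁ := mul_nonneg hδpos.le hd₁0
        rw [hFγ2]
        linarith [hgap, hεT, haβd, hδd₁]

  -- conclude differentiability
  rw [hasDerivAt_iff_isLittleO]
  rw [Asymptotics.isLittleO_iff]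
  intro c hc
  have hr1 : 0 < δ / (2 * (β + 1)) := by positivity
  have hr2 : 0 < c / (2 * β₂ / δ + 1) := by positivity
  filter_upwards [Metric.ball_mem_nhds γ₀ (lt_min hr1 hr2)] with γ hγ
  rw [Metric.mem_ball, Real.dist_eq] at hγ
  obtain ⟨hlow, hup⟩ := key γ (le_of_lt (lt_of_lt_of_le hγ (min_le_left _ _)))
  have habs : |F γ - F γ₀ - (γ - γ₀) • (-sP)| ≤ (2 * β₂ / δ) * (γ - γ₀) ^ 2 := by
    have hKsq : 0 ≤ (2 * β₂ / δ) * (γ - γ₀) ^ 2 := by positivity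
    rw [smul_eq_mul, mul_neg, sub_neg_eq_add]
    rw [abs_le]
    constructor <;> linarith [hlow, hup, hKsq]
  rw [Real.norm_eq_abs, Real.norm_eq_abs]
  refine habs.trans ?_
  have hγ2 : |γ - γ₀| ≤ c / (2 * β₂ / δ + 1) := le_of_lt (lt_of_lt_of_le hγ (min_le_right _ _))
  have h1 : (2 * β₂ / δ) * (γ - γ₀) ^ 2 ≤ (2 * β₂ / δ + 1) * (|γ - γ₀| * |γ - γ₀|) := by
    rw [sq]
    have : (γ - γ₀) * (γ - γ₀) = |γ - γ₀| * |γ - γ₀| := (abs_mul_abs_self _).symm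
    rw [this]
    have h2 : 0 ≤ |γ - γ₀| * |γ - γ₀| := mul_nonneg (abs_nonneg _) (abs_nonneg _)
    linarith [h2]
  refine h1.trans ?_
  have : (2 * β₂ / δ + 1) * (|γ - γ₀| * |γ - γ₀|) ≤ (2 * β₂ / δ + 1) * ((c / (2 * β₂ / δ + 1)) * |γ - γ₀|) := by
    have hpos : (0:ℝ) < 2 * β₂ / δ + 1 := by positivity
    refine mul_le_mul_of_nonneg_left ?_ hpos.le
    exact mul_le_mul_of_nonneg_right hγ2 (abs_nonneg _)
  refine this.trans ?_
  have hpos : (0:ℝ) < 2 * β₂ / δ + 1 := by positivity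
  rw [← mul_assoc, mul_div_cancel₀ _ hpos.ne']
end
end

section
/- For positive definite matrices A and B on a finite-dimensional Hilbert space, ∫₀^∞ Tr[B {A > γB}] dγ = Tr[A], where {A > γB} denotes the projection onto the positive part of A - γB. -/
open MeasureTheory Matrix
open scoped ComplexOrder
noncomputable section

namespace ProjPosProof

variable {n : ℕ}

lemma contOn (f : ℝ → ℝ) (X : Matrix (Fin n) (Fin n) ℂ) :
    ContinuousOn f (spectrum ℝ X) :=
  (Matrix.finite_real_spectrum (A := X)).continuousOn _

lemma isHermitian_smul_real (γ : ℝ) {B : Matrix (Fin n) (Fin n) ℂ} (hB : B.IsHermitian) :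
    (γ • B).IsHermitian := by
  show (γ • B)ᴴ = γ • B
  rw [Matrix.conjTranspose_smul, star_trivial, hB.eq]

lemma posSemidef_cfc {X : Matrix (Fin n) (Fin n) ℂ} (hX : X.IsHermitian) (f : ℝ → ℝ)
    (hf : ∀ x, 0 ≤ f x) : (cfc f X).PosSemidef := by
  rw [hX.cfc_eq]
  unfold Matrix.IsHermitian.cfc
  have hD : (Matrix.diagonal (RCLike.ofReal ∘ f ∘ hX.eigenvalues) :
      Matrix (Fin n) (Fin n) ℂ).PosSemidef :=
    Matrix.posSemidef_diagonal_iff.mpr fun i => by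
      simpa using hf (hX.eigenvalues i)
  simpa [Matrix.star_eq_conjTranspose] using
    hD.mul_mul_conjTranspose_same (hX.eigenvectorUnitary : Matrix (Fin n) (Fin n) ℂ)

lemma trace_re_nonneg {S : Matrix (Fin n) (Fin n) ℂ} (hS : S.PosSemidef) :
    0 ≤ (Matrix.trace S).re := by
  rw [Matrix.trace]
  rw [Complex.re_sum]
  refine Finset.sum_nonneg fun i _ => ?_
  have h := hS.dotProduct_mulVec_nonneg (Pi.single i 1)
  have e : star (Pi.single i (1:ℂ)) ⬝ᵥ (S *ᵥ Pi.single i 1) = S i i := by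
    simp [dotProduct, Matrix.mulVec, Pi.single_apply, apply_ite,
      mul_ite, ite_mul, Finset.sum_ite_eq, Finset.sum_ite_eq']
  rw [e] at h
  simpa using (Complex.le_def.mp h).1

open scoped MatrixOrder in
lemma trace_mul_re_nonneg {S T : Matrix (Fin n) (Fin n) ℂ} (hS : S.PosSemidef)
    (hT : T.PosSemidef) : 0 ≤ (Matrix.trace (S * T)).re := by
  have h1 : S * T = CFC.sqrt S * (CFC.sqrt S * T) := by rw [← mul_assoc, CFC.sqrt_mul_sqrt_self S hS.nonneg]
  have h2 : Matrix.trace (S * T) = Matrix.trace (CFC.sqrt S * T * CFC.sqrt S) := by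
    rw [h1, Matrix.trace_mul_comm]
  rw [h2]
  refine trace_re_nonneg ?_
  have := hT.mul_mul_conjTranspose_same (CFC.sqrt S)
  rwa [(CFC.sqrt_nonneg S).posSemidef.isHermitian.eq] at this

lemma mul_projPos_self {X : Matrix (Fin n) (Fin n) ℂ} (hX : X.IsHermitian) :
    X * projPos X = mposPart X := by
  have hsa : IsSelfAdjoint X := hX
  have h := cfc_mul (fun x : ℝ => x) (fun x : ℝ => if 0 < x then (1:ℝ) else 0) X
    (contOn _ X) (contOn _ X)
  rw [cfc_id' ℝ X hsa] at h
  unfold projPos mposPart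
  rw [← h]
  congr 1
  funext x
  rcases lt_or_ge 0 x with hx | hx
  · simp [hx, max_eq_left hx.le]
  · simp [not_lt.mpr hx, max_eq_right hx]

lemma key_le {X Y : Matrix (Fin n) (Fin n) ℂ} (hX : X.IsHermitian) (hY : Y.IsHermitian) :
    (Matrix.trace (X * projPos Y)).re ≤ (Matrix.trace (mposPart X)).re := by
  have hsaX : IsSelfAdjoint X := hX
  have hsaY : IsSelfAdjoint Y := hY
  have hQ : (projPos Y).PosSemidef := posSemidef_cfc hY _ (fun x => by positivity)
  have hXp : (mposPart X).PosSemidef := posSemidef_cfc hX _ (fun x => le_max_right x 0)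
  have h1 : 0 ≤ (Matrix.trace ((mposPart X - X) * projPos Y)).re := by
    have e : mposPart X - X = cfc (fun x : ℝ => max x 0 - x) X := by
      rw [cfc_sub (fun x : ℝ => max x 0) (fun x : ℝ => x) X (contOn _ _) (contOn _ _),
        cfc_id' ℝ X hsaX]
      rfl
    refine trace_mul_re_nonneg ?_ hQ
    rw [e]
    exact posSemidef_cfc hX _ (fun x => by simp [sub_nonneg, le_max_left])
  have h2 : 0 ≤ (Matrix.trace (mposPart X * ((1 : Matrix (Fin n) (Fin n) ℂ) - projPos Y))).re := by
    have e : (1 : Matrix (Fin n) (Fin n) ℂ) - projPos Y =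
        cfc (fun x : ℝ => 1 - (if 0 < x then (1:ℝ) else 0)) Y := by
      rw [cfc_sub (fun _ : ℝ => (1:ℝ)) (fun x : ℝ => if 0 < x then (1:ℝ) else 0) Y
        (contOn _ _) (contOn _ _), cfc_const_one ℝ Y hsaY]
      rfl
    refine trace_mul_re_nonneg hXp ?_
    rw [e]
    exact posSemidef_cfc hY _ (fun x => by split <;> norm_num)
  have e1 : Matrix.trace ((mposPart X - X) * projPos Y)
      = Matrix.trace (mposPart X * projPos Y) - Matrix.trace (X * projPos Y) := by
    rw [Matrix.sub_mul, Matrix.trace_sub]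
  have e2 : Matrix.trace (mposPart X * ((1 : Matrix (Fin n) (Fin n) ℂ) - projPos Y))
      = Matrix.trace (mposPart X) - Matrix.trace (mposPart X * projPos Y) := by
    rw [Matrix.mul_sub, Matrix.mul_one, Matrix.trace_sub]
  rw [e1] at h1
  rw [e2] at h2
  rw [Complex.sub_re] at h1 h2
  linarith

variable (A B : Matrix (Fin n) (Fin n) ℂ)

/-- `f γ = Tr[(A - γB)₊]`. -/
def fA (γ : ℝ) : ℝ := (Matrix.trace (mposPart (A - γ • B))).re

/-- `t γ = Tr[B {A > γB}]`. -/
def tA (γ : ℝ) : ℝ := (Matrix.trace (B * projPos (A - γ • B))).re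

variable {A B}

lemma herm (hA : A.IsHermitian) (hB : B.IsHermitian) (γ : ℝ) : (A - γ • B).IsHermitian :=
  hA.sub (isHermitian_smul_real γ hB)

lemma trace_expand (hA : A.IsHermitian) (hB : B.IsHermitian) (γ₁ γ₂ : ℝ) :
    (Matrix.trace ((A - γ₁ • B) * projPos (A - γ₂ • B))).re
      = fA A B γ₂ + (γ₂ - γ₁) * tA A B γ₂ := by
  have e : A - γ₁ • B = (A - γ₂ • B) + (γ₂ - γ₁) • B := by
    rw [sub_smul]; abel
  rw [e, Matrix.add_mul, Matrix.trace_add, smul_mul_assoc, Matrix.trace_smul,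
    mul_projPos_self (herm hA hB γ₂), Complex.add_re]
  unfold fA tA
  rw [Complex.real_smul]
  simp [Complex.mul_re]

lemma sandwich (hA : A.IsHermitian) (hB : B.IsHermitian) {γ₁ γ₂ : ℝ} (h : γ₁ ≤ γ₂) :
    fA A B γ₂ + (γ₂ - γ₁) * tA A B γ₂ ≤ fA A B γ₁ ∧
      fA A B γ₁ - (γ₂ - γ₁) * tA A B γ₁ ≤ fA A B γ₂ := by
  constructor
  · have hk := key_le (herm hA hB γ₁) (herm hA hB γ₂)
    rw [trace_expand hA hB γ₁ γ₂] at hk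
    exact hk
  · have hk := key_le (herm hA hB γ₂) (herm hA hB γ₁)
    rw [trace_expand hA hB γ₂ γ₁] at hk
    have : fA A B γ₁ + (γ₁ - γ₂) * tA A B γ₁ ≤ fA A B γ₂ := hk
    linarith

lemma tA_antitone (hA : A.IsHermitian) (hB : B.IsHermitian) : Antitone (tA A B) := by
  intro x y hxy
  rcases eq_or_lt_of_le hxy with rfl | hlt
  · exact le_rfl
  · have h1 := (sandwich hA hB hlt.le).1
    have h2 := (sandwich hA hB hlt.le).2
    nlinarith

lemma tA_nonneg (hA : A.IsHermitian) (hB : B.PosSemidef) (γ : ℝ) : 0 ≤ tA A B γ :=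
  trace_mul_re_nonneg hB (posSemidef_cfc (herm hA hB.isHermitian γ) _ (fun x => by positivity))

lemma fA_zero (hA : A.PosDef) : fA A B 0 = (Matrix.trace A).re := by
  unfold fA
  congr 2
  have e0 : A - (0:ℝ) • B = A := by rw [zero_smul, sub_zero]
  rw [e0]
  unfold mposPart
  have hsa : IsSelfAdjoint A := hA.1
  rw [cfc_congr (g := fun x : ℝ => x) (fun x hx => ?_), cfc_id' ℝ A hsa]
  rw [hA.1.spectrum_real_eq_range_eigenvalues] at hx
  obtain ⟨i, rfl⟩ := hx
  exact max_eq_left (hA.eigenvalues_pos i).le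

lemma vanish_of_eigs {X : Matrix (Fin n) (Fin n) ℂ} (hX : X.IsHermitian)
    (h : ∀ i, hX.eigenvalues i ≤ 0) : projPos X = 0 ∧ mposPart X = 0 := by
  have hspec : ∀ x ∈ spectrum ℝ X, x ≤ 0 := by
    intro x hx
    rw [hX.spectrum_real_eq_range_eigenvalues] at hx
    obtain ⟨i, rfl⟩ := hx
    exact h i
  constructor
  · unfold projPos
    rw [cfc_congr (g := fun _ : ℝ => (0:ℝ)) (fun x hx => by simp [not_lt.mpr (hspec x hx)])]
    exact cfc_const_zero ℝ X
  · unfold mposPart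
    rw [cfc_congr (g := fun _ : ℝ => (0:ℝ)) (fun x hx => max_eq_right (hspec x hx))]
    exact cfc_const_zero ℝ X

lemma exists_bound (hA : A.PosDef) (hB : B.PosDef) :
    ∃ M : ℝ, 0 < M ∧ ∀ γ : ℝ, M ≤ γ →
      ∀ (h : (A - γ • B).IsHermitian) (i : Fin n), h.eigenvalues i ≤ 0 := by
  rcases Nat.eq_zero_or_pos n with h0 | hpos
  · exact ⟨1, one_pos, fun γ _ h i => by subst h0; exact i.elim0⟩
  have hcont : ∀ M : Matrix (Fin n) (Fin n) ℂ,
      Continuous (fun v : EuclideanSpace ℂ (Fin n) => (star (v : Fin n → ℂ) ⬝ᵥ (M *ᵥ v)).re) := by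
    intro M
    apply Complex.continuous_re.comp
    simp only [dotProduct, Matrix.mulVec]
    refine continuous_finset_sum _ fun i _ => Continuous.mul ?_ ?_
    · exact Continuous.star ((continuous_apply i).comp (PiLp.continuous_ofLp 2 _))
    · exact continuous_finset_sum _ fun j _ =>
        (continuous_const.mul ((continuous_apply j).comp (PiLp.continuous_ofLp 2 _)))
  have hsne : (Metric.sphere (0 : EuclideanSpace ℂ (Fin n)) 1).Nonempty := by
    refine ⟨EuclideanSpace.single ⟨0, hpos⟩ (1:ℂ), ?_⟩
    simp [EuclideanSpace.norm_single]
  obtain ⟨u₀, hu₀, hmin⟩ := (isCompact_sphere (0 : EuclideanSpace ℂ (Fin n)) 1).exists_isMinOn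
    hsne (hcont B).continuousOn
  obtain ⟨w₀, hw₀, hmax⟩ := (isCompact_sphere (0 : EuclideanSpace ℂ (Fin n)) 1).exists_isMaxOn
    hsne (hcont A).continuousOn
  set c : ℝ := (star (u₀ : Fin n → ℂ) ⬝ᵥ (B *ᵥ u₀)).re with hc_def
  set C : ℝ := (star (w₀ : Fin n → ℂ) ⬝ᵥ (A *ᵥ w₀)).re with hC_def
  have hu₀ne : (u₀ : Fin n → ℂ) ≠ 0 := by
    intro hz
    have h1 : ‖u₀‖ = 1 := by simpa using hu₀
    rw [show u₀ = 0 from by simpa using congrArg (WithLp.toLp 2) hz] at h1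
    simp at h1
  have hc : 0 < c := by
    have h := hB.dotProduct_mulVec_pos hu₀ne
    simpa [hc_def] using (Complex.lt_def.mp h).1
  refine ⟨max 1 (C / c), lt_of_lt_of_le one_pos (le_max_left _ _), ?_⟩
  intro γ hγ hH i
  have hγ1 : (1:ℝ) ≤ γ := le_trans (le_max_left _ _) hγ
  have hγ0 : 0 ≤ γ := le_trans zero_le_one hγ1
  have hγC : C ≤ γ * c := by
    have h' : C / c ≤ γ := le_trans (le_max_right _ _) hγ
    calc C = (C / c) * c := by field_simp
    _ ≤ γ * c := by nlinarith
  set v : EuclideanSpace ℂ (Fin n) := hH.eigenvectorBasis i with hv_def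
  have hvnorm : ‖v‖ = 1 := hH.eigenvectorBasis.orthonormal.1 i
  have hvs : v ∈ Metric.sphere (0 : EuclideanSpace ℂ (Fin n)) 1 := by
    simp [Metric.mem_sphere, dist_zero_right, hvnorm]
  have heig : hH.eigenvalues i
      = ((star (v : Fin n → ℂ)) ⬝ᵥ ((A - γ • B) *ᵥ (v : Fin n → ℂ))).re := hH.eigenvalues_eq i
  have hsmul : (γ • B : Matrix (Fin n) (Fin n) ℂ) = (γ : ℂ) • B := by
    ext i j
    simp [Complex.real_smul]
  have hsplit : (star (v : Fin n → ℂ)) ⬝ᵥ ((A - γ • B) *ᵥ (v : Fin n → ℂ))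
      = ((star (v : Fin n → ℂ)) ⬝ᵥ (A *ᵥ (v : Fin n → ℂ)))
        - (γ:ℂ) * ((star (v : Fin n → ℂ)) ⬝ᵥ (B *ᵥ (v : Fin n → ℂ))) := by
    rw [Matrix.sub_mulVec, dotProduct_sub, hsmul, Matrix.smul_mulVec,
      dotProduct_smul, smul_eq_mul]
  rw [heig, hsplit, Complex.sub_re]
  simp only [Complex.mul_re, Complex.ofReal_re, Complex.ofReal_im, zero_mul, sub_zero]
  have hle1 : ((star (v : Fin n → ℂ)) ⬝ᵥ (A *ᵥ (v : Fin n → ℂ))).re ≤ C := hmax hvs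
  have hle2 : c ≤ ((star (v : Fin n → ℂ)) ⬝ᵥ (B *ᵥ (v : Fin n → ℂ))).re := hmin hvs
  nlinarith

end ProjPosProof

open ProjPosProof in
/-- `∫₀^∞ Tr[B {A > γB}] dγ = Tr[A]` for positive definite `A`, `B`. -/
theorem integral_trace_projPos_eq_trace {n : ℕ} (A B : Matrix (Fin n) (Fin n) ℂ)
    (hA : A.PosDef) (hB : B.PosDef) :
    ∫ γ in Set.Ioi (0:ℝ), (Matrix.trace (B * projPos (A - γ • B))).re
      = (Matrix.trace A).re := by
  have hAh := hA.1
  have hBh := hB.1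
  have hanti : Antitone (tA A B) := tA_antitone hAh hBh
  obtain ⟨M, hM0, hbound⟩ := exists_bound hA hB
  have hvan : ∀ γ : ℝ, M ≤ γ → tA A B γ = 0 ∧ fA A B γ = 0 := by
    intro γ hγ
    obtain ⟨hp, hm⟩ := vanish_of_eigs (herm hAh hBh γ) (hbound γ hγ _)
    constructor
    · unfold tA; rw [hp, mul_zero, Matrix.trace_zero]; simp
    · unfold fA; rw [hm, Matrix.trace_zero]; simp
  have hint : ∀ a b : ℝ, IntervalIntegrable (tA A B) volume a b := fun a b =>
    (hanti.antitoneOn _).intervalIntegrable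
  have hshow : (fun γ : ℝ => (Matrix.trace (B * projPos (A - γ • B))).re) = tA A B := rfl
  rw [hshow]
  -- split the integral
  have hint1 : IntegrableOn (tA A B) (Set.Ioc 0 M) volume := by
    have h := (intervalIntegrable_iff).mp (hint 0 M)
    rwa [Set.uIoc_of_le hM0.le] at h
  have hint2 : IntegrableOn (tA A B) (Set.Ioi M) volume := by
    refine (integrableOn_congr_fun (g := fun _ => (0:ℝ)) (fun γ hγ => (hvan γ (le_of_lt hγ)).1)
      measurableSet_Ioi).mpr ?_
    exact integrableOn_zero
  have hsplit : ∫ γ in Set.Ioi (0:ℝ), tA A B γ = ∫ γ in Set.Ioc 0 M, tA A B γ := by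
    rw [← Set.Ioc_union_Ioi_eq_Ioi hM0.le,
      MeasureTheory.setIntegral_union Set.Ioc_disjoint_Ioi_same measurableSet_Ioi hint1 hint2]
    have hz : ∫ γ in Set.Ioi M, tA A B γ = 0 := by
      rw [MeasureTheory.setIntegral_congr_fun measurableSet_Ioi
        (fun γ hγ => (hvan γ (le_of_lt hγ)).1)]
      simp
    rw [hz, add_zero]
  rw [hsplit, ← intervalIntegral.integral_of_le hM0.le]
  -- Riemann-sum argument
  set I := ∫ γ in (0:ℝ)..M, tA A B γ with hI_def
  set D := fA A B 0 - fA A B M with hD_def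
  have hkey : ∀ N : ℕ, 0 < N → |I - D| ≤ (M / N) * (tA A B 0 - tA A B M) := by
    intro N hN
    have hNR : (0:ℝ) < N := Nat.cast_pos.mpr hN
    set δ := M / N with hδ_def
    have hδ0 : 0 < δ := div_pos hM0 hNR
    set a : ℕ → ℝ := fun i => i * δ with ha_def
    have ha0 : a 0 = 0 := by simp [ha_def]
    have hNne : (N:ℝ) ≠ 0 := ne_of_gt hNR
    have haN : a N = M := by
      simp only [ha_def, hδ_def]; field_simp
    have hsum : ∑ i ∈ Finset.range N, ∫ γ in (a i)..(a (i+1)), tA A B γ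
        = ∫ γ in (a 0)..(a N), tA A B γ :=
      intervalIntegral.sum_integral_adjacent_intervals (fun k _ => hint _ _)
    rw [ha0, haN] at hsum
    have hDsum : D = ∑ i ∈ Finset.range N, (fA A B (a i) - fA A B (a (i+1))) := by
      rw [Finset.sum_range_sub' (fun i => fA A B (a i)), ha0, haN]
    have hterm : ∀ i ∈ Finset.range N,
        |(∫ γ in (a i)..(a (i+1)), tA A B γ) - (fA A B (a i) - fA A B (a (i+1)))|
          ≤ δ * (tA A B (a i) - tA A B (a (i+1))) := by
      intro i _
      have hle : a i ≤ a (i+1) := by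
        simp only [ha_def]
        push_cast
        nlinarith [hδ0.le]
      have hd : a (i+1) - a i = δ := by simp only [ha_def]; push_cast; ring
      have hup : ∫ γ in (a i)..(a (i+1)), tA A B γ ≤ δ * tA A B (a i) := by
        have h := intervalIntegral.integral_mono_on (g := fun _ => tA A B (a i)) hle
          (hint _ _) intervalIntegrable_const (fun x hx => hanti hx.1)
        rwa [intervalIntegral.integral_const, hd, smul_eq_mul] at h
      have hlo : δ * tA A B (a (i+1)) ≤ ∫ γ in (a i)..(a (i+1)), tA A B γ := by
        have h := intervalIntegral.integral_mono_on (f := fun _ => tA A B (a (i+1))) hle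
          intervalIntegrable_const (hint _ _) (fun x hx => hanti hx.2)
        rwa [intervalIntegral.integral_const, hd, smul_eq_mul] at h
      have hs := sandwich hAh hBh hle
      rw [hd] at hs
      obtain ⟨hs1, hs2⟩ := hs
      rw [abs_sub_le_iff]
      constructor <;> linarith
    calc |I - D| = |∑ i ∈ Finset.range N,
          ((∫ γ in (a i)..(a (i+1)), tA A B γ) - (fA A B (a i) - fA A B (a (i+1))))| := by
          rw [Finset.sum_sub_distrib, hsum, ← hDsum]
      _ ≤ ∑ i ∈ Finset.range N,
          |(∫ γ in (a i)..(a (i+1)), tA A B γ) - (fA A B (a i) - fA A B (a (i+1)))| :=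
          Finset.abs_sum_le_sum_abs _ _
      _ ≤ ∑ i ∈ Finset.range N, δ * (tA A B (a i) - tA A B (a (i+1))) :=
          Finset.sum_le_sum hterm
      _ = δ * (tA A B (a 0) - tA A B (a N)) := by
          rw [← Finset.mul_sum, Finset.sum_range_sub' (fun i => tA A B (a i))]
      _ = (M / N) * (tA A B 0 - tA A B M) := by rw [ha0, haN, hδ_def]
  have hID : I = D := by
    by_contra hne
    have hpos : 0 < |I - D| := abs_pos.mpr (sub_ne_zero.mpr hne)
    have hs0 : 0 ≤ tA A B 0 - tA A B M := sub_nonneg.mpr (hanti hM0.le)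
    obtain ⟨N, hN⟩ := exists_nat_gt (M * (tA A B 0 - tA A B M) / |I - D|)
    have hNR : (0:ℝ) < N := lt_of_le_of_lt (by positivity) hN
    have hNpos : 0 < N := Nat.cast_pos.mp hNR
    have h1 := hkey N hNpos
    have h2 : M * (tA A B 0 - tA A B M) < N * |I - D| := by
      have := (div_lt_iff₀ hpos).mp hN
      linarith
    have h3 : |I - D| * N ≤ M * (tA A B 0 - tA A B M) := by
      have : |I - D| ≤ M * (tA A B 0 - tA A B M) / N := by
        rw [div_mul_eq_mul_div] at h1
        exact h1
      calc |I - D| * N ≤ (M * (tA A B 0 - tA A B M) / N) * N := by nlinarith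
        _ = M * (tA A B 0 - tA A B M) := by field_simp
    nlinarith
  rw [hID, hD_def, (hvan M le_rfl).2, fA_zero hA, sub_zero]

end
end

section
/- For positive semidefinite matrices A, B with B invertible, the maps γ ↦ Tr[A {A < γB}] and γ ↦ Tr[A {A ≤ γB}] are nondecreasing on (0, ∞). -/
open MeasureTheory Matrix
open scoped ComplexOrder
noncomputable section

section Aux

variable {n : ℕ}

private lemma specCont (X : Matrix (Fin n) (Fin n) ℂ) (f : ℝ → ℝ) :
    ContinuousOn f (spectrum ℝ X) :=
  (Matrix.finite_real_spectrum (A := X)).continuousOn f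

private lemma cfc_posSemidef {X : Matrix (Fin n) (Fin n) ℂ} (hX : IsSelfAdjoint X)
    {f : ℝ → ℝ} (hf : ∀ x, 0 ≤ f x) : (cfc f X).PosSemidef := by
  have h1 : cfc f X = cfc (fun x => Real.sqrt (f x)) X * cfc (fun x => Real.sqrt (f x)) X := by
    rw [← cfc_mul _ _ X (specCont X _) (specCont X _)]
    exact cfc_congr fun x _ => (Real.mul_self_sqrt (hf x)).symm
  have h2 : IsSelfAdjoint (cfc (fun x => Real.sqrt (f x)) X) := cfc_predicate _ X
  rw [h1]
  have h3 : (cfc (fun x => Real.sqrt (f x)) X)ᴴ = cfc (fun x => Real.sqrt (f x)) X := h2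
  have h4 := Matrix.posSemidef_conjTranspose_mul_self (cfc (fun x => Real.sqrt (f x)) X)
  rwa [h3] at h4

private lemma trace_re_nonneg {M : Matrix (Fin n) (Fin n) ℂ} (hM : M.PosSemidef) :
    0 ≤ (Matrix.trace M).re := by
  rw [Matrix.trace]
  rw [Complex.re_sum]
  refine Finset.sum_nonneg fun i _ => ?_
  have := hM.re_dotProduct_nonneg (Pi.single i 1)
  simpa [Matrix.diag, Matrix.mulVec_single, dotProduct, Pi.single_apply] using this

open scoped MatrixOrder in
private lemma trace_mul_re_nonneg {M N : Matrix (Fin n) (Fin n) ℂ}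
    (hM : M.PosSemidef) (hN : N.PosSemidef) : 0 ≤ (Matrix.trace (M * N)).re := by
  have key : Matrix.trace ((CFC.sqrt M)ᴴ * N * CFC.sqrt M) = Matrix.trace (M * N) := by
    rw [Matrix.trace_mul_cycle]
    rw [show (CFC.sqrt M)ᴴ = CFC.sqrt M from (CFC.sqrt_nonneg M).posSemidef.1]
    rw [CFC.sqrt_mul_sqrt_self M hM.nonneg]
  rw [← key]
  exact trace_re_nonneg (hN.conjTranspose_mul_mul_same (CFC.sqrt M))

private lemma key_ineq {X T : Matrix (Fin n) (Fin n) ℂ} (hX : IsSelfAdjoint X)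
    (hT : T.PosSemidef) (hT1 : ((1 : Matrix (Fin n) (Fin n) ℂ) - T).PosSemidef)
    {f : ℝ → ℝ} (hf : ∀ x, x * f x = max x 0) :
    (Matrix.trace (X * T)).re ≤ (Matrix.trace (X * cfc f X)).re := by
  set Xp := cfc (fun x : ℝ => max x 0) X with hXp_def
  set Xm := cfc (fun x : ℝ => max (-x) 0) X with hXm_def
  have hXp : Xp.PosSemidef := cfc_posSemidef hX fun x => le_max_right _ _
  have hXm : Xm.PosSemidef := cfc_posSemidef hX fun x => le_max_right _ _
  have hsplit : X = Xp - Xm := by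
    rw [hXp_def, hXm_def, ← cfc_sub _ _ X (specCont X _) (specCont X _)]
    conv_lhs => rw [← cfc_id' ℝ X hX]
    refine cfc_congr fun x _ => ?_
    rcases le_total 0 x with h | h
    · simp [max_eq_left h, max_eq_right (neg_nonpos.mpr h)]
    · simp [max_eq_right h, max_eq_left (neg_nonneg.mpr h)]
  have hmulf : X * cfc f X = Xp := by
    nth_rewrite 1 [← cfc_id' ℝ X hX]
    rw [← cfc_mul _ _ X (specCont X _) (specCont X _), hXp_def]
    exact cfc_congr fun x _ => hf x
  have e1 : Matrix.trace (X * T) = Matrix.trace (Xp * T) - Matrix.trace (Xm * T) := by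
    rw [hsplit, sub_mul, Matrix.trace_sub]
  have e2 : Matrix.trace Xp = Matrix.trace (Xp * T) + Matrix.trace (Xp * (1 - T)) := by
    rw [mul_sub, mul_one, ← Matrix.trace_add]
    congr 1
    abel
  have n1 : 0 ≤ (Matrix.trace (Xm * T)).re := trace_mul_re_nonneg hXm hT
  have n2 : 0 ≤ (Matrix.trace (Xp * (1 - T))).re := trace_mul_re_nonneg hXp hT1
  rw [hmulf, e1, e2]
  simp only [Complex.sub_re, Complex.add_re]
  linarith

private lemma mono_aux {f : ℝ → ℝ} (hf01 : ∀ x, f x = 0 ∨ f x = 1)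
    (hfmax : ∀ x, x * f x = max x 0)
    {A B : Matrix (Fin n) (Fin n) ℂ} (hA : A.PosSemidef) (hB : B.PosSemidef) :
    MonotoneOn (fun γ : ℝ => (Matrix.trace (A * cfc f (γ • B - A))).re) (Set.Ioi 0) := by
  intro γ hγ γ' hγ' hle
  rcases eq_or_lt_of_le hle with rfl | hlt
  · exact le_rfl
  dsimp only
  have hAsa : IsSelfAdjoint A := hA.1
  have hBsa : IsSelfAdjoint B := hB.1
  set X := γ • B - A with hX_def
  set Y := γ' • B - A with hY_def
  have hXsa : IsSelfAdjoint X := (IsSelfAdjoint.smul (star_trivial γ) hBsa).sub hAsa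
  have hYsa : IsSelfAdjoint Y := (IsSelfAdjoint.smul (star_trivial γ') hBsa).sub hAsa
  set P := cfc f X with hP_def
  set Q := cfc f Y with hQ_def
  have hf0 : ∀ x, 0 ≤ f x := fun x => by rcases hf01 x with h | h <;> simp [h]
  have h1f : ∀ x, 0 ≤ 1 - f x := fun x => by rcases hf01 x with h | h <;> simp [h]
  have hP : P.PosSemidef := cfc_posSemidef hXsa hf0
  have hQ : Q.PosSemidef := cfc_posSemidef hYsa hf0
  have hP1 : ((1 : Matrix (Fin n) (Fin n) ℂ) - P).PosSemidef := by
    have h : cfc (fun x : ℝ => 1 - f x) X = 1 - P := by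
      rw [cfc_sub _ _ X (specCont X _) (specCont X _), cfc_const_one ℝ X hXsa]
    rw [← h]; exact cfc_posSemidef hXsa h1f
  have hQ1 : ((1 : Matrix (Fin n) (Fin n) ℂ) - Q).PosSemidef := by
    have h : cfc (fun x : ℝ => 1 - f x) Y = 1 - Q := by
      rw [cfc_sub _ _ Y (specCont Y _) (specCont Y _), cfc_const_one ℝ Y hYsa]
    rw [← h]; exact cfc_posSemidef hYsa h1f
  have key1 : (Matrix.trace (Y * P)).re ≤ (Matrix.trace (Y * Q)).re :=
    key_ineq hYsa hP hP1 hfmax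
  have key2 : (Matrix.trace (X * Q)).re ≤ (Matrix.trace (X * P)).re :=
    key_ineq hXsa hQ hQ1 hfmax
  have hY_eq : Y = X + (γ' - γ) • B := by rw [hY_def, hX_def]; module
  have hX_eq : X = Y - (γ' - γ) • B := by rw [hY_def, hX_def]; module
  have hA_eqX : A = γ • B - X := by rw [hX_def]; module
  have hA_eqY : A = γ' • B - Y := by rw [hY_def]; module
  have eYP : (Matrix.trace (Y * P)).re
      = (Matrix.trace (X * P)).re + (γ' - γ) * (Matrix.trace (B * P)).re := by
    conv_lhs => rw [hY_eq]
    rw [add_mul, Matrix.trace_add, Matrix.smul_mul, Matrix.trace_smul]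
    simp [Complex.add_re, Complex.real_smul, Complex.mul_re]
  have eXQ : (Matrix.trace (X * Q)).re
      = (Matrix.trace (Y * Q)).re - (γ' - γ) * (Matrix.trace (B * Q)).re := by
    conv_lhs => rw [hX_eq]
    rw [sub_mul, Matrix.trace_sub, Matrix.smul_mul, Matrix.trace_smul]
    simp [Complex.sub_re, Complex.real_smul, Complex.mul_re]
  have eAP : (Matrix.trace (A * P)).re
      = γ * (Matrix.trace (B * P)).re - (Matrix.trace (X * P)).re := by
    conv_lhs => rw [hA_eqX]
    rw [sub_mul, Matrix.trace_sub, Matrix.smul_mul, Matrix.trace_smul]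
    simp [Complex.sub_re, Complex.real_smul, Complex.mul_re]
  have eAQ : (Matrix.trace (A * Q)).re
      = γ' * (Matrix.trace (B * Q)).re - (Matrix.trace (Y * Q)).re := by
    conv_lhs => rw [hA_eqY]
    rw [sub_mul, Matrix.trace_sub, Matrix.smul_mul, Matrix.trace_smul]
    simp [Complex.sub_re, Complex.real_smul, Complex.mul_re]
  rw [eAP, eAQ]
  rw [eYP] at key1
  rw [eXQ] at key2
  have hγpos : (0 : ℝ) < γ := hγ
  have hd : (0 : ℝ) < γ' - γ := by linarith
  have h3 : (γ' - γ) * (Matrix.trace (B * P)).re ≤ (γ' - γ) * (Matrix.trace (B * Q)).re := by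
    linarith
  have hb : (Matrix.trace (B * P)).re ≤ (Matrix.trace (B * Q)).re :=
    le_of_mul_le_mul_left h3 hd
  have h4 : γ * (Matrix.trace (B * P)).re ≤ γ * (Matrix.trace (B * Q)).re :=
    mul_le_mul_of_nonneg_left hb hγpos.le
  nlinarith [key2, h4]

end Aux

/-- for `A, B ⪰ 0` with `B` invertible, the maps
`γ ↦ Tr[A {A < γB}]` and `γ ↦ Tr[A {A ≤ γB}]` are nondecreasing on `(0, ∞)`. -/
theorem monotoneOn_trace_proj {n : ℕ} (A B : Matrix (Fin n) (Fin n) ℂ)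
    (hA : A.PosSemidef) (hB : B.PosSemidef) (hBinv : IsUnit B) :
    MonotoneOn (fun γ : ℝ => (Matrix.trace (A * projPos (γ • B - A))).re) (Set.Ioi 0) ∧
    MonotoneOn (fun γ : ℝ => (Matrix.trace (A * projNonneg (γ • B - A))).re) (Set.Ioi 0) := by
  constructor
  · have := mono_aux (f := fun x : ℝ => if 0 < x then (1:ℝ) else 0)
      (fun x => by split_ifs <;> simp)
      (fun x => by
        split_ifs with h
        · rw [mul_one, max_eq_left h.le]
        · rw [mul_zero]; exact (max_eq_right (not_lt.mp h)).symm)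
      hA hB
    simpa only [projPos] using this
  · have := mono_aux (f := fun x : ℝ => if 0 ≤ x then (1:ℝ) else 0)
      (fun x => by split_ifs <;> simp)
      (fun x => by
        split_ifs with h
        · rw [mul_one, max_eq_left h]
        · rw [mul_zero]; exact (max_eq_right (not_le.mp h).le).symm)
      hA hB
    simpa only [projNonneg] using this
end
end

section
/- Let A, B be Hermitian matrices, t₀ ∈ ℝ, and f a function continuously differentiable on a neighborhood of the spectrum of A + t₀B. Then the map t ↦ Tr[f(A + tB)] is differentiable at t₀ with derivative Tr[B · f'(A + t₀B)]. -/
open MeasureTheory Matrix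
open scoped ComplexOrder
noncomputable section

section helperlemmas
open Polynomial Filter
open scoped Manifold


def antider (q : ℝ[X]) : ℝ[X] := q.sum fun i c => C (c / (i+1)) * X^(i+1)

lemma derivative_antider (q : ℝ[X]) : derivative (antider q) = q := by
  unfold antider
  rw [Polynomial.sum_def, map_sum]
  rw [Finset.sum_congr rfl (fun i _ => Polynomial.derivative_C_mul_X_pow _ _)]
  conv_rhs => rw [← Polynomial.sum_C_mul_X_pow_eq q]
  rw [Polynomial.sum_def]
  refine Finset.sum_congr rfl fun i _ => ?_
  simp only [Nat.cast_add, Nat.cast_one, Nat.add_sub_cancel]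
  congr 1
  rw [div_mul_cancel₀ _ (by positivity)]

lemma unitary_entry_le {n : ℕ} (U : Matrix.unitaryGroup (Fin n) ℂ) (i j : Fin n) :
    ‖(U : Matrix (Fin n) (Fin n) ℂ) i j‖ ≤ 1 := by
  have h1 : star (U : Matrix (Fin n) (Fin n) ℂ) * U = 1 := Unitary.star_mul_self_of_mem U.2
  have h2 := congrFun (congrFun h1 j) j
  simp only [Matrix.mul_apply, Matrix.star_apply, Matrix.one_apply_eq] at h2
  have h2' : ∀ k, star ((U : Matrix (Fin n) (Fin n) ℂ) k j) * U k j
      = (Complex.normSq ((U : Matrix (Fin n) (Fin n) ℂ) k j) : ℂ) := fun k => by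
    rw [Complex.star_def, Complex.normSq_eq_conj_mul_self]
  rw [Finset.sum_congr rfl (fun k _ => h2' k)] at h2
  have h3 : ∑ k, Complex.normSq ((U : Matrix (Fin n) (Fin n) ℂ) k j) = 1 := by
    exact_mod_cast h2
  have h4 : Complex.normSq ((U : Matrix (Fin n) (Fin n) ℂ) i j) ≤ 1 := by
    rw [← h3]
    exact Finset.single_le_sum (f := fun k => Complex.normSq ((U : Matrix (Fin n) (Fin n) ℂ) k j)) (fun k _ => Complex.normSq_nonneg _) (Finset.mem_univ i)
  have := Complex.sq_norm ((U : Matrix (Fin n) (Fin n) ℂ) i j)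
  nlinarith [norm_nonneg ((U : Matrix (Fin n) (Fin n) ℂ) i j)]

lemma trace_mul_cfc_abs_le {n : ℕ} {X : Matrix (Fin n) (Fin n) ℂ} (hX : X.IsHermitian)
    (Cm : Matrix (Fin n) (Fin n) ℂ) (h : ℝ → ℝ) {ε : ℝ} (hε0 : 0 ≤ ε)
    (hh : ∀ x ∈ spectrum ℝ X, |h x| ≤ ε) :
    ‖Matrix.trace (Cm * cfc h X)‖ ≤ (∑ i, ∑ j, ‖Cm i j‖) * n * ε := by
  rw [hX.cfc_eq, Matrix.IsHermitian.cfc, Unitary.conjStarAlgAut_apply]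
  set U : Matrix (Fin n) (Fin n) ℂ := (hX.eigenvectorUnitary : Matrix (Fin n) (Fin n) ℂ) with hU
  set d : Fin n → ℂ := RCLike.ofReal ∘ h ∘ hX.eigenvalues with hd
  have hM : ∀ j i, (U * diagonal d * star U) j i = ∑ a, U j a * d a * (star U) a i := by
    intro j i
    rw [Matrix.mul_apply]
    refine Finset.sum_congr rfl fun a _ => ?_
    rw [Matrix.mul_diagonal]
  have htr : Matrix.trace (Cm * (U * diagonal d * star U)) =
      ∑ i, ∑ j, ∑ a, Cm i j * (U j a * d a * (star U) a i) := by
    simp only [Matrix.trace, Matrix.diag, Matrix.mul_apply, hM, Finset.mul_sum]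
  rw [htr]
  have key : ∀ i j a, ‖Cm i j * (U j a * d a * (star U) a i)‖ ≤
      ‖Cm i j‖ * ε := by
    intro i j a
    rw [norm_mul, norm_mul, norm_mul]
    have h1 : ‖U j a‖ ≤ 1 := unitary_entry_le _ _ _
    have h2 : ‖(star U) a i‖ ≤ 1 := by
      rw [Matrix.star_apply]
      calc ‖star (U i a)‖ = ‖U i a‖ := by
            rw [Complex.star_def, Complex.norm_conj]
        _ ≤ 1 := unitary_entry_le _ _ _
    have h3 : ‖d a‖ ≤ ε := by
      rw [hd]
      simp only [Function.comp_apply, RCLike.norm_ofReal]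
      exact hh _ (hX.eigenvalues_mem_spectrum_real a)
    have n1 : (0:ℝ) ≤ ‖U j a‖ := norm_nonneg _
    have n2 : (0:ℝ) ≤ ‖(star U) a i‖ := norm_nonneg _
    have n3 : (0:ℝ) ≤ ‖d a‖ := norm_nonneg _
    have n4 : (0:ℝ) ≤ ‖Cm i j‖ := norm_nonneg _
    calc ‖Cm i j‖ * (‖U j a‖ * ‖d a‖ *
        ‖star U a i‖)
        ≤ ‖Cm i j‖ * (1 * ε * 1) := by
          refine mul_le_mul_of_nonneg_left ?_ n4
          exact mul_le_mul (mul_le_mul h1 h3 n3 zero_le_one) h2 n2 (by positivity)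
      _ = ‖Cm i j‖ * ε := by ring
  refine le_trans (norm_sum_le _ _) ?_
  refine le_trans (Finset.sum_le_sum fun i _ => norm_sum_le _ _) ?_
  refine le_trans (Finset.sum_le_sum fun i _ => Finset.sum_le_sum fun j _ =>
    norm_sum_le _ _) ?_
  refine le_trans (Finset.sum_le_sum fun i _ => Finset.sum_le_sum fun j _ =>
    Finset.sum_le_sum fun a _ => key i j a) ?_
  apply le_of_eq
  simp only [Finset.sum_const, Finset.card_univ, Fintype.card_fin, nsmul_eq_mul]
  rw [Finset.sum_mul, Finset.sum_mul]
  refine Finset.sum_congr rfl fun i _ => ?_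
  rw [Finset.sum_mul, Finset.sum_mul]
  refine Finset.sum_congr rfl fun j _ => ?_
  ring

lemma spec_bound {n : ℕ} [Nonempty (Fin n)] (A B : Matrix (Fin n) (Fin n) ℂ) (t₀ : ℝ) :
    ∃ R : ℝ, 0 ≤ R ∧ ∀ t ∈ Metric.ball t₀ 1, spectrum ℝ (A + t • B) ⊆ Set.Icc (-R) R := by
  letI := Matrix.linftyOpNormedRing (n := Fin n) (α := ℂ)
  letI := Matrix.linftyOpNormedAlgebra (R := ℝ) (n := Fin n) (α := ℂ)
  letI := Matrix.linfty_opNormOneClass (n := Fin n) (α := ℂ)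
  refine ⟨‖A‖ + (|t₀|+1) * ‖B‖, by positivity, fun t ht x hx => ?_⟩
  have h1 := spectrum.subset_closedBall_norm (𝕜 := ℝ) (A + t • B) hx
  rw [Metric.mem_closedBall, Real.dist_eq, sub_zero] at h1
  have h2 : ‖A + t • B‖ ≤ ‖A‖ + (|t₀|+1) * ‖B‖ := by
    refine (norm_add_le _ _).trans ?_
    have h3 : ‖t • B‖ = |t| * ‖B‖ := by rw [norm_smul, Real.norm_eq_abs]
    have h4 : |t| ≤ |t₀| + 1 := by
      have := abs_sub_abs_le_abs_sub t t₀
      rw [Metric.mem_ball, Real.dist_eq] at ht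
      linarith
    have h5 : |t| * ‖B‖ ≤ (|t₀|+1) * ‖B‖ := mul_le_mul_of_nonneg_right h4 (norm_nonneg _)
    linarith [h3 ▸ h5]
  rw [Set.mem_Icc]
  constructor <;> [linarith [neg_abs_le x]; linarith [le_abs_self x]]

lemma spec_eventually_subset {n : ℕ} [Nonempty (Fin n)] (A B : Matrix (Fin n) (Fin n) ℂ)
    (t₀ : ℝ) {V : Set ℝ} (hV : IsOpen V) (hsp : spectrum ℝ (A + t₀ • B) ⊆ V) :
    ∀ᶠ t in nhds t₀, spectrum ℝ (A + t • B) ⊆ V := by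
  obtain ⟨R, hR0, hR⟩ := spec_bound A B t₀
  set K : Set ℝ := Set.Icc (-R) R ∩ Vᶜ with hKdef
  have hK : IsCompact K := isCompact_Icc.inter_right hV.isClosed_compl
  have hdet : ∀ (x t : ℝ), (x ∈ spectrum ℝ (A + t • B) ↔
      (x • (1:Matrix (Fin n) (Fin n) ℂ) - (A + t • B)).det = 0) := by
    intro x t
    rw [spectrum.mem_iff, Algebra.algebraMap_eq_smul_one, Matrix.isUnit_iff_isUnit_det,
      isUnit_iff_ne_zero]
    exact not_not
  have hcont : Continuous (fun p : ℝ × ℝ =>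
      (p.1 • (1:Matrix (Fin n) (Fin n) ℂ) - (A + p.2 • B)).det) := by
    refine Continuous.matrix_det ?_
    exact (continuous_fst.smul continuous_const).sub
      (continuous_const.add (continuous_snd.smul continuous_const))
  set O : Set (ℝ × ℝ) := {p | (p.1 • (1:Matrix (Fin n) (Fin n) ℂ) - (A + p.2 • B)).det ≠ 0}
    with hOdef
  have hO : IsOpen O := isOpen_compl_singleton.preimage hcont
  have hKO : K ×ˢ ({t₀} : Set ℝ) ⊆ O := by
    rintro ⟨x, t⟩ ⟨⟨hx1, hx2⟩, ht⟩
    simp only [Set.mem_singleton_iff] at ht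
    subst ht
    intro hdet0
    exact hx2 (hsp ((hdet x t).mpr hdet0))
  obtain ⟨u, v, hu, hv, hKu, htv, huv⟩ := generalized_tube_lemma hK isCompact_singleton hO hKO
  filter_upwards [hv.mem_nhds (htv rfl), Metric.ball_mem_nhds t₀ one_pos] with t htv' htball
  intro x hx
  by_contra hxV
  have hxK : x ∈ K := ⟨hR t htball hx, hxV⟩
  exact (huv (Set.mk_mem_prod (hKu hxK) htv')) ((hdet x t).mp hx)

section polyderiv
variable {n : ℕ} (A B : Matrix (Fin n) (Fin n) ℂ)

lemma hasDerivAt_trace_pow (k : ℕ) (t₁ : ℝ) :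
    HasDerivAt (fun t : ℝ => Matrix.trace ((A + t • B)^k))
      ((k:ℂ) * Matrix.trace (B * (A + t₁ • B)^(k-1))) t₁ := by
  letI := Matrix.linftyOpNormedRing (n := Fin n) (α := ℂ)
  letI := Matrix.linftyOpNormedAlgebra (R := ℝ) (n := Fin n) (α := ℂ)
  have hX : HasDerivAt (fun t : ℝ => A + t • B) B t₁ := by
    have := ((hasDerivAt_id t₁).smul_const B).const_add A
    simp only [id, one_smul] at this
    exact this
  set X₁ := A + t₁ • B with hX₁
  have hpow : ∀ m : ℕ, HasDerivAt (fun t : ℝ => (A + t • B)^m)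
      (∑ j ∈ Finset.range m, X₁^j * B * X₁^(m-1-j)) t₁ := by
    intro m
    induction m with
    | zero =>
        simp only [pow_zero, Finset.range_zero, Finset.sum_empty]
        exact hasDerivAt_const t₁ (1 : Matrix (Fin n) (Fin n) ℂ)
    | succ m ih =>
      have h := ih.mul hX
      have heq : (∑ j ∈ Finset.range m, X₁^j * B * X₁^(m-1-j)) * X₁ + (A + t₁ • B)^m * B
          = ∑ j ∈ Finset.range (m+1), X₁^j * B * X₁^(m-j) := by
        rw [Finset.sum_range_succ, Finset.sum_mul]
        congr 1
        · refine Finset.sum_congr rfl fun j hj => ?_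
          rw [Finset.mem_range] at hj
          rw [mul_assoc (X₁ ^ j * B), ← pow_succ]
          have he : m - 1 - j + 1 = m - j := by omega
          rw [he]
        · rw [Nat.sub_self, pow_zero, mul_one, hX₁]
      have h2 : HasDerivAt (fun t : ℝ => (A + t • B)^m * (A + t • B))
          (∑ j ∈ Finset.range (m+1), X₁^j * B * X₁^(m-j)) t₁ := heq ▸ h
      have h3 : (fun t : ℝ => (A + t • B)^(m+1)) = fun t => (A + t • B)^m * (A + t • B) := by
        funext t; rw [pow_succ]
      rw [h3]
      simpa only [Nat.add_sub_cancel] using h2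
  have htraceD : Matrix.trace (∑ j ∈ Finset.range k, X₁^j * B * X₁^(k-1-j))
      = (k:ℂ) * Matrix.trace (B * X₁^(k-1)) := by
    rw [Matrix.trace_sum]
    have hco : ∀ j ∈ Finset.range k, Matrix.trace (X₁^j * B * X₁^(k-1-j))
        = Matrix.trace (B * X₁^(k-1)) := by
      intro j hj
      rw [Finset.mem_range] at hj
      rw [Matrix.trace_mul_cycle, ← pow_add]
      have he : k - 1 - j + j = k - 1 := by omega
      rw [he, Matrix.trace_mul_comm]
    rw [Finset.sum_congr rfl hco, Finset.sum_const, Finset.card_range, nsmul_eq_mul]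
  have htr : ∀ (f : ℝ → Matrix (Fin n) (Fin n) ℂ) (D : Matrix (Fin n) (Fin n) ℂ) (t : ℝ),
      HasDerivAt f D t → HasDerivAt (fun s => Matrix.trace (f s)) (Matrix.trace D) t := by
    intro f D t hf
    have hc : Continuous (fun M : Matrix (Fin n) (Fin n) ℂ => Matrix.trace M) := by
      simp only [Matrix.trace]
      exact continuous_finset_sum _ fun i _ => (continuous_apply_apply i i).comp continuous_id
    let L : Matrix (Fin n) (Fin n) ℂ →L[ℝ] ℂ :=
      { toLinearMap := (Matrix.traceLinearMap (Fin n) ℂ ℂ).restrictScalars ℝ, cont := hc }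
    exact (L.hasFDerivAt.comp_hasDerivAt t hf : HasDerivAt (fun s => L (f s)) (L D) t)
  exact htraceD ▸ htr _ _ _ (hpow k)

lemma hasDerivAt_trace_aeval (p : ℝ[X]) (t₁ : ℝ) :
    HasDerivAt (fun t : ℝ => Matrix.trace (aeval (A + t • B) p))
      (Matrix.trace (B * aeval (A + t₁ • B) (derivative p))) t₁ := by
  induction p using Polynomial.induction_on with
  | C r =>
    simpa using hasDerivAt_const t₁ (Matrix.trace (algebraMap ℝ (Matrix (Fin n) (Fin n) ℂ) r))
  | add p q hp hq =>
    have h := hp.add hq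
    simp only [map_add, Matrix.mul_add, Matrix.trace_add] at h ⊢
    exact h
  | monomial m r _ =>
    have h := (hasDerivAt_trace_pow A B (m+1) t₁).const_smul r
    simp only [Nat.add_sub_cancel] at h
    have e1 : ∀ (M : Matrix (Fin n) (Fin n) ℂ),
        Matrix.trace (aeval M (C r * X^(m+1))) = r • Matrix.trace (M^(m+1)) := by
      intro M
      rw [_root_.map_mul, aeval_C, _root_.map_pow, aeval_X, ← Algebra.smul_def,
        Matrix.trace_smul]
    have e2 : Matrix.trace (B * aeval (A + t₁ • B) (derivative (C r * X^(m+1))))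
        = r • ((((m+1 : ℕ)):ℂ) * Matrix.trace (B * (A + t₁ • B)^m)) := by
      rw [derivative_C_mul_X_pow, Nat.add_sub_cancel, _root_.map_mul, aeval_C,
        _root_.map_pow, aeval_X, ← Algebra.smul_def, mul_smul_comm, Matrix.trace_smul]
      rw [Complex.real_smul, Complex.real_smul]
      push_cast
      ring
    simp only [e1, e2]
    exact h
end polyderiv
lemma core {n : ℕ} [Nonempty (Fin n)] (A B : Matrix (Fin n) (Fin n) ℂ)
    (hA : A.IsHermitian) (hB : B.IsHermitian) (t₀ : ℝ) (F : ℝ → ℝ) (hF : ContDiff ℝ 1 F) :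
    HasDerivAt (fun t : ℝ => (Matrix.trace (cfc F (A + t • B))).re)
      ((Matrix.trace (B * cfc (deriv F) (A + t₀ • B))).re) t₀ := by
  have hSA : ∀ t : ℝ, IsSelfAdjoint (A + t • B) := fun t => by
    have hA' : IsSelfAdjoint A := hA
    have hB' : IsSelfAdjoint B := hB
    exact hA'.add (IsSelfAdjoint.smul (show IsSelfAdjoint t from star_trivial t) hB')
  have hHerm : ∀ t : ℝ, (A + t • B).IsHermitian := fun t => hSA t
  obtain ⟨R, hR0, hR⟩ := spec_bound A B t₀
  set R' : ℝ := R + 1 with hR'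
  have hR'0 : 0 < R' := by simp only [hR']; linarith
  have hJ : ∀ t ∈ Metric.ball t₀ 1, spectrum ℝ (A + t • B) ⊆ Set.Icc (-R') R' := fun t ht =>
    (hR t ht).trans (Set.Icc_subset_Icc (by simp only [hR']; linarith) (by simp only [hR']; linarith))
  have hFc : Continuous F := hF.continuous
  have hFd : Continuous (deriv F) := hF.continuous_deriv le_rfl
  have hq : ∀ k : ℕ, ∃ p : ℝ[X], ∀ x ∈ Set.Icc (-R') R',
      |Polynomial.eval x p - deriv F x| < 1/((k:ℝ)+1) := fun k =>
    exists_polynomial_near_of_continuousOn (-R') R' (deriv F) hFd.continuousOn _ (by positivity)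
  choose q hqq using hq
  set p : ℕ → ℝ[X] := fun k =>
    antider (q k) + Polynomial.C (F (-R') - Polynomial.eval (-R') (antider (q k))) with hpdef
  have hp' : ∀ k, derivative (p k) = q k := fun k => by
    simp [hpdef, derivative_antider]
  have hpR' : ∀ k, Polynomial.eval (-R') (p k) = F (-R') := fun k => by
    simp [hpdef]
  have hclose : ∀ k, ∀ x ∈ Set.Icc (-R') R',
      |Polynomial.eval x (p k) - F x| ≤ (2*R') * (1/((k:ℝ)+1)) := by
    intro k x hx
    set G : ℝ → ℝ := fun y => Polynomial.eval y (p k) - F y with hGdef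
    have hG : ∀ y ∈ Set.Icc (-R') R', HasDerivWithinAt G
        (Polynomial.eval y (q k) - deriv F y) (Set.Icc (-R') R') y := by
      intro y hy
      have h1 : HasDerivAt G (Polynomial.eval y (q k) - deriv F y) y := by
        have h2 := ((p k).hasDerivAt y).sub
          ((hF.differentiable one_ne_zero).differentiableAt.hasDerivAt)
        rwa [hp' k] at h2
      exact h1.hasDerivWithinAt
    have hbound : ∀ y ∈ Set.Icc (-R') R',
        ‖Polynomial.eval y (q k) - deriv F y‖ ≤ 1/((k:ℝ)+1) := fun y hy => by
      rw [Real.norm_eq_abs]; exact (hqq k y hy).le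
    have hmem : (-R') ∈ Set.Icc (-R') R' := by
      constructor <;> linarith
    have hkey := Convex.norm_image_sub_le_of_norm_hasDerivWithin_le hG hbound
      (convex_Icc _ _) hmem hx
    have hGR : G (-R') = 0 := by simp only [hGdef]; rw [hpR' k]; ring
    rw [hGR, sub_zero] at hkey
    obtain ⟨hx1, hx2⟩ := hx
    have hxb : ‖x - (-R')‖ ≤ 2*R' := by
      rw [Real.norm_eq_abs, abs_of_nonneg (by linarith)]; linarith
    calc |G x| ≤ 1/((k:ℝ)+1) * ‖x - (-R')‖ := by
          simpa [Real.norm_eq_abs] using hkey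
      _ ≤ 1/((k:ℝ)+1) * (2*R') := by
          have : (0:ℝ) ≤ 1/((k:ℝ)+1) := by positivity
          exact mul_le_mul_of_nonneg_left hxb this
      _ = (2*R') * (1/((k:ℝ)+1)) := by ring
  set SB : ℝ := ∑ i, ∑ j, ‖B i j‖ with hSB
  have hSB0 : 0 ≤ SB :=
    Finset.sum_nonneg fun i _ => Finset.sum_nonneg fun j _ => norm_nonneg _
  set S1 : ℝ := ∑ i, ∑ j, ‖(1 : Matrix (Fin n) (Fin n) ℂ) i j‖ with hS1
  have hS10 : 0 ≤ S1 :=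
    Finset.sum_nonneg fun i _ => Finset.sum_nonneg fun j _ => norm_nonneg _
  apply hasDerivAt_of_tendstoUniformlyOn (l := atTop)
    (f := fun (k : ℕ) (t : ℝ) => (Matrix.trace (aeval (A + t • B) (p k))).re)
    (f' := fun (k : ℕ) (t : ℝ) => (Matrix.trace (B * aeval (A + t • B) (q k))).re)
    (g' := fun t : ℝ => (Matrix.trace (B * cfc (deriv F) (A + t • B))).re)
    (Metric.isOpen_ball) ?_ ?_ ?_ (Metric.mem_ball_self one_pos)
  · -- uniform convergence of derivatives
    rw [Metric.tendstoUniformlyOn_iff]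
    intro ε hε
    have hconv : Tendsto (fun k : ℕ => SB * (n:ℝ) * (1/((k:ℝ)+1))) atTop (nhds 0) := by
      have h1 := tendsto_one_div_add_atTop_nhds_zero_nat.const_mul (SB * (n:ℝ))
      simpa [mul_assoc] using h1
    filter_upwards [hconv.eventually_lt_const hε] with k hk
    intro t ht
    rw [Real.dist_eq]
    have hpoly : (aeval (A + t • B)) (q k) =
        cfc (fun x => Polynomial.eval x (q k)) (A + t • B) :=
      (cfc_polynomial (q k) (A + t • B) (hSA t)).symm
    have hsub : Matrix.trace (B * cfc (deriv F) (A + t • B))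
          - Matrix.trace (B * aeval (A + t • B) (q k))
        = Matrix.trace (B * cfc (fun x => deriv F x - Polynomial.eval x (q k)) (A + t • B)) := by
      rw [hpoly, ← Matrix.trace_sub, ← Matrix.mul_sub,
        ← cfc_sub (deriv F) (fun x => Polynomial.eval x (q k)) (A + t • B)
          hFd.continuousOn ((q k).continuous_aeval).continuousOn]
    have hbd := trace_mul_cfc_abs_le (hHerm t) B
      (fun x => deriv F x - Polynomial.eval x (q k)) (ε := 1/((k:ℝ)+1)) (by positivity)
      (fun x hx => by
        have h3 := hqq k x (hJ t ht hx)
        rw [abs_sub_comm] at h3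
        exact h3.le)
    calc |(Matrix.trace (B * cfc (deriv F) (A + t • B))).re
          - (Matrix.trace (B * aeval (A + t • B) (q k))).re|
        = |(Matrix.trace (B * cfc (deriv F) (A + t • B))
            - Matrix.trace (B * aeval (A + t • B) (q k))).re| := by rw [Complex.sub_re]
      _ ≤ ‖Matrix.trace (B * cfc (deriv F) (A + t • B))
            - Matrix.trace (B * aeval (A + t • B) (q k))‖ := Complex.abs_re_le_norm _
      _ = ‖Matrix.trace
            (B * cfc (fun x => deriv F x - Polynomial.eval x (q k)) (A + t • B))‖ := by
          rw [hsub]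
      _ ≤ SB * (n:ℝ) * (1/((k:ℝ)+1)) := hbd
      _ < ε := hk
  · -- each approximant has the required derivative
    refine Eventually.of_forall (fun k t ht => ?_)
    have h := hasDerivAt_trace_aeval A B (p k) t
    rw [hp' k] at h
    exact Complex.reCLM.hasFDerivAt.comp_hasDerivAt t h
  · -- pointwise convergence
    intro t ht
    rw [tendsto_iff_dist_tendsto_zero]
    have hbnd : ∀ k : ℕ, dist ((Matrix.trace (aeval (A + t • B) (p k))).re)
        ((Matrix.trace (cfc F (A + t • B))).re) ≤ S1 * (n:ℝ) * (2*R') * (1/((k:ℝ)+1)) := by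
      intro k
      rw [Real.dist_eq]
      have hpoly : (aeval (A + t • B)) (p k) =
          cfc (fun x => Polynomial.eval x (p k)) (A + t • B) :=
        (cfc_polynomial (p k) (A + t • B) (hSA t)).symm
      have hsub : Matrix.trace (aeval (A + t • B) (p k)) - Matrix.trace (cfc F (A + t • B))
          = Matrix.trace ((1 : Matrix (Fin n) (Fin n) ℂ)
              * cfc (fun x => Polynomial.eval x (p k) - F x) (A + t • B)) := by
        rw [hpoly, ← Matrix.trace_sub,
          ← cfc_sub (fun x => Polynomial.eval x (p k)) F (A + t • B)
            ((p k).continuous_aeval).continuousOn hFc.continuousOn, one_mul]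
      have hbd := trace_mul_cfc_abs_le (hHerm t) (1 : Matrix (Fin n) (Fin n) ℂ)
        (fun x => Polynomial.eval x (p k) - F x) (ε := (2*R') * (1/((k:ℝ)+1)))
        (by positivity) (fun x hx => hclose k x (hJ t ht hx))
      calc |(Matrix.trace (aeval (A + t • B) (p k))).re
            - (Matrix.trace (cfc F (A + t • B))).re|
          = |(Matrix.trace (aeval (A + t • B) (p k))
              - Matrix.trace (cfc F (A + t • B))).re| := by rw [Complex.sub_re]
        _ ≤ ‖Matrix.trace (aeval (A + t • B) (p k))
              - Matrix.trace (cfc F (A + t • B))‖ := Complex.abs_re_le_norm _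
        _ = ‖Matrix.trace ((1 : Matrix (Fin n) (Fin n) ℂ)
              * cfc (fun x => Polynomial.eval x (p k) - F x) (A + t • B))‖ := by rw [hsub]
        _ ≤ S1 * (n:ℝ) * ((2*R') * (1/((k:ℝ)+1))) := hbd
        _ = S1 * (n:ℝ) * (2*R') * (1/((k:ℝ)+1)) := by ring
    have hconv : Tendsto (fun k : ℕ => S1 * (n:ℝ) * (2*R') * (1/((k:ℝ)+1))) atTop (nhds 0) := by
      have h1 := tendsto_one_div_add_atTop_nhds_zero_nat.const_mul (S1 * (n:ℝ) * (2*R'))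
      simpa [mul_assoc] using h1
    exact squeeze_zero (fun k => dist_nonneg) hbnd hconv


/-- for Hermitian `A`, `B` and `f` continuously differentiable on a
neighborhood of the spectrum of `A + t₀ B`, the map `t ↦ Tr[f(A + tB)]` is
differentiable at `t₀` with derivative `Tr[B ⬝ f'(A + t₀ B)]`. -/
theorem hasDerivAt_trace_cfc {n : ℕ} (A B : Matrix (Fin n) (Fin n) ℂ)
    (hA : A.IsHermitian) (hB : B.IsHermitian) (t₀ : ℝ) (f : ℝ → ℝ) (U : Set ℝ)
    (hU : IsOpen U) (hspec : spectrum ℝ (A + t₀ • B) ⊆ U) (hf : ContDiffOn ℝ 1 f U) :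
    HasDerivAt (fun t : ℝ => (Matrix.trace (cfc f (A + t • B))).re)
      ((Matrix.trace (B * cfc (deriv f) (A + t₀ • B))).re) t₀ := by
  rcases Nat.eq_zero_or_pos n with hn | hn
  · subst hn
    have h0 : ∀ M : Matrix (Fin 0) (Fin 0) ℂ, Matrix.trace M = 0 := fun M => by
      simp [Matrix.trace]
    simp only [h0, Complex.zero_re]
    exact hasDerivAt_const t₀ 0
  haveI : Nonempty (Fin n) := ⟨⟨0, hn⟩⟩
  have hScompact : IsCompact (spectrum ℝ (A + t₀ • B)) :=
    (Matrix.finite_real_spectrum).isCompact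
  obtain ⟨L, hLc, hSL, hLU⟩ := exists_compact_between hScompact hU hspec
  obtain ⟨L₂, hL₂c, hLL₂, hL₂U⟩ := exists_compact_between hLc hU hLU
  obtain ⟨χ, hχ0, hχ1, hχmem⟩ := exists_contMDiffMap_zero_one_of_isClosed (n := ⊤) 𝓘(ℝ, ℝ)
    (isOpen_interior.isClosed_compl) (hLc.isClosed)
    (Set.disjoint_left.mpr fun x hx hxL => hx (hLL₂ hxL))
  have hχ : ContDiff ℝ 1 (χ : ℝ → ℝ) := by
    have h1 : ContMDiff 𝓘(ℝ, ℝ) 𝓘(ℝ, ℝ) ((⊤:ℕ∞):WithTop ℕ∞) (χ : ℝ → ℝ) := χ.contMDiff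
    have h2 : ContDiff ℝ ((⊤:ℕ∞):WithTop ℕ∞) (χ : ℝ → ℝ) := contMDiff_iff_contDiff.mp h1
    exact h2.of_le (by exact_mod_cast le_top)
  set F : ℝ → ℝ := fun x => χ x * f x with hFdef
  have hFsm : ContDiff ℝ 1 F := by
    rw [contDiff_iff_contDiffAt]
    intro x
    by_cases hx : x ∈ U
    · exact (hχ.contDiffAt).mul (hf.contDiffAt (hU.mem_nhds hx))
    · have hx2 : x ∈ (L₂ᶜ : Set ℝ) := fun h => hx (hL₂U h)
      have hopen : IsOpen (L₂ᶜ : Set ℝ) := hL₂c.isClosed.isOpen_compl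
      have hev : F =ᶠ[nhds x] (fun _ => 0) := by
        filter_upwards [hopen.mem_nhds hx2] with y hy
        have hy0 : χ y = 0 := by
          have := hχ0 (fun hmem => hy (interior_subset hmem))
          simpa using this
        simp [hFdef, hy0]
      exact (contDiffAt_const (c := (0:ℝ))).congr_of_eventuallyEq hev
  have hFeq : Set.EqOn f F (interior L) := fun x hx => by
    have h1 : χ x = 1 := by simpa using hχ1 (interior_subset hx)
    simp [hFdef, h1]
  have hSV : spectrum ℝ (A + t₀ • B) ⊆ interior L := hSL
  have hderiv_eq : cfc (deriv f) (A + t₀ • B) = cfc (deriv F) (A + t₀ • B) := by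
    apply cfc_congr
    intro x hx
    apply Filter.EventuallyEq.deriv_eq
    filter_upwards [isOpen_interior.mem_nhds (hSV hx)] with y hy
    exact hFeq hy
  have hev := spec_eventually_subset A B t₀ isOpen_interior hSV
  have hfun : (fun t : ℝ => (Matrix.trace (cfc f (A + t • B))).re)
      =ᶠ[nhds t₀] (fun t : ℝ => (Matrix.trace (cfc F (A + t • B))).re) := by
    filter_upwards [hev] with t ht
    rw [cfc_congr (fun x hx => hFeq (ht hx))]
  rw [hderiv_eq]
  exact (core A B hA hB t₀ F hFsm).congr_of_eventuallyEq hfun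

end helperlemmas
end
end

section
/- Let ρ, σ be density matrices with D_max(ρ‖σ) < ∞, let 0 < c < e^{D_max(ρ‖σ)}, and let f : [0,∞) → ℝ be convex, nondecreasing, differentiable with f(1) = 0 and f(0) ≥ 0. Define D_f(ρ‖σ) := f(0) + ∫₀^∞ f'(γ) Tr[σ {ρ > γσ}] dγ. Then the quantum Markov inequality Tr[σ {ρ > cσ}] ≤ D_f(ρ‖σ)/f(c) holds whenever f(c) > 0. -/
open MeasureTheory Matrix
open scoped ComplexOrder
noncomputable section

/-- `D_max(ρ‖σ) = log inf {t : ρ ≤ t σ}`. -/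
def Dmax {n : ℕ} (ρ σ : Matrix (Fin n) (Fin n) ℂ) : ℝ :=
  Real.log (sInf {t : ℝ | (t • σ - ρ).PosSemidef})

namespace QMIAux

variable {n : ℕ}

lemma matrix_contOn (X : Matrix (Fin n) (Fin n) ℂ) (f : ℝ → ℝ) :
    ContinuousOn f (spectrum ℝ X) :=
  Matrix.finite_real_spectrum.continuousOn f

lemma psd_trace_nonneg {A : Matrix (Fin n) (Fin n) ℂ} (hA : A.PosSemidef) : 0 ≤ A.trace := by
  exact hA.trace_nonneg

open scoped MatrixOrder in
lemma psd_trace_mul_nonneg {A B : Matrix (Fin n) (Fin n) ℂ} (hA : A.PosSemidef)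
    (hB : B.PosSemidef) : 0 ≤ (A * B).trace := by
  have h1 : A * B = A * (CFC.sqrt B * CFC.sqrt B) := by rw [CFC.sqrt_mul_sqrt_self B hB.nonneg]
  rw [h1, ← mul_assoc, Matrix.trace_mul_comm]
  have h2 : CFC.sqrt B * (A * CFC.sqrt B) = (CFC.sqrt B)ᴴ * A * CFC.sqrt B := by
    rw [(CFC.sqrt_nonneg B).posSemidef.isHermitian.eq, mul_assoc]
  rw [h2]
  exact psd_trace_nonneg (hA.conjTranspose_mul_mul_same _)

lemma psd_trace_mul_re_nonneg {A B : Matrix (Fin n) (Fin n) ℂ} (hA : A.PosSemidef)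
    (hB : B.PosSemidef) : 0 ≤ ((A * B).trace).re :=
  (Complex.le_def.mp (psd_trace_mul_nonneg hA hB)).1

lemma herm_smul {A : Matrix (Fin n) (Fin n) ℂ} (hA : A.IsHermitian) (γ : ℝ) :
    (γ • A).IsHermitian := by
  unfold Matrix.IsHermitian
  rw [Matrix.conjTranspose_smul, hA.eq, star_trivial]

lemma psd_smul {A : Matrix (Fin n) (Fin n) ℂ} (hA : A.PosSemidef) {γ : ℝ} (hγ : 0 ≤ γ) :
    (γ • A).PosSemidef := by
  exact hA.smul hγ

lemma cfc_psd {X : Matrix (Fin n) (Fin n) ℂ} (hX : X.IsHermitian) (f : ℝ → ℝ)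
    (hf : ∀ x ∈ spectrum ℝ X, 0 ≤ f x) : (cfc f X).PosSemidef := by
  rw [hX.cfc_eq, Matrix.IsHermitian.cfc]
  have hd : (Matrix.diagonal (RCLike.ofReal ∘ f ∘ hX.eigenvalues) :
      Matrix (Fin n) (Fin n) ℂ).PosSemidef := by
    rw [Matrix.posSemidef_diagonal_iff]
    intro i
    have := hf _ (hX.eigenvalues_mem_spectrum_real i)
    simpa [Function.comp] using Complex.zero_le_real.mpr this
  simpa [Matrix.star_eq_conjTranspose] using hd.mul_mul_conjTranspose_same
    (B := (Matrix.IsHermitian.eigenvectorUnitary hX : Matrix (Fin n) (Fin n) ℂ))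

lemma spectrum_nonpos {X : Matrix (Fin n) (Fin n) ℂ} (hX : X.IsHermitian)
    (h : (-X).PosSemidef) : ∀ x ∈ spectrum ℝ X, x ≤ 0 := by
  intro x hx
  rw [hX.spectrum_real_eq_range_eigenvalues] at hx
  obtain ⟨i, rfl⟩ := hx
  have h1 := h.re_dotProduct_nonneg (⇑(hX.eigenvectorBasis i))
  rw [hX.eigenvalues_eq i]
  simp only [Matrix.neg_mulVec, dotProduct_neg, map_neg] at h1
  exact neg_nonneg.mp h1

variable {X : Matrix (Fin n) (Fin n) ℂ}

lemma mul_projPos_eq (hX : X.IsHermitian) :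
    X * projPos X = cfc (fun x : ℝ => max x 0) X := by
  rw [projPos]
  nth_rewrite 1 [← cfc_id' ℝ X hX.isSelfAdjoint]
  rw [← cfc_mul _ _ X (matrix_contOn X _) (matrix_contOn X _)]
  apply cfc_congr
  intro x _
  rcases lt_or_ge 0 x with h | h
  · simp [h, max_eq_left (le_of_lt h)]
  · simp [not_lt.mpr h, max_eq_right h]

lemma split_eq (hX : X.IsHermitian) :
    X = cfc (fun x : ℝ => max x 0) X - cfc (fun x : ℝ => max (-x) 0) X := by
  rw [← cfc_sub _ _ X (matrix_contOn X _) (matrix_contOn X _)]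
  conv_lhs => rw [← cfc_id' ℝ X hX.isSelfAdjoint]
  apply cfc_congr
  intro x _
  rcases le_total 0 x with h | h
  · simp [max_eq_left h, max_eq_right (neg_nonpos.mpr h)]
  · simp [max_eq_right h, max_eq_left (neg_nonneg.mpr h)]

lemma one_sub_cfc (hX : X.IsHermitian) (f : ℝ → ℝ) :
    1 - cfc f X = cfc (fun x => 1 - f x) X := by
  rw [← cfc_one (R := ℝ) X hX.isSelfAdjoint,
    ← cfc_sub _ _ X (matrix_contOn X _) (matrix_contOn X _)]
  exact cfc_congr fun x _ => by simp

lemma projPos_psd (hX : X.IsHermitian) : (projPos X).PosSemidef :=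
  cfc_psd hX _ (fun x _ => by split <;> norm_num)

lemma one_sub_projPos_psd (hX : X.IsHermitian) : (1 - projPos X).PosSemidef := by
  rw [projPos, one_sub_cfc hX]
  exact cfc_psd hX _ (fun x _ => by split <;> norm_num)

lemma projPos_zero (hX : X.IsHermitian) (h : (-X).PosSemidef) : projPos X = 0 := by
  rw [projPos, ← cfc_zero (R := ℝ) X]
  apply cfc_congr
  intro x hx
  have := spectrum_nonpos hX h x hx
  simp [not_lt.mpr this]

lemma trace_le_trace_projPos (hX : X.IsHermitian) {Q : Matrix (Fin n) (Fin n) ℂ}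
    (hQ : Q.PosSemidef) (hQ1 : (1 - Q).PosSemidef) :
    ((X * Q).trace).re ≤ ((X * projPos X).trace).re := by
  have hXpP : (cfc (fun x : ℝ => max x 0) X).PosSemidef :=
    cfc_psd hX _ (fun x _ => le_max_right _ _)
  have hXmP : (cfc (fun x : ℝ => max (-x) 0) X).PosSemidef :=
    cfc_psd hX _ (fun x _ => le_max_right _ _)
  have h1 : 0 ≤ (((cfc (fun x : ℝ => max (-x) 0) X) * Q).trace).re :=
    psd_trace_mul_re_nonneg hXmP hQ
  have h2 : 0 ≤ (((cfc (fun x : ℝ => max x 0) X) * (1 - Q)).trace).re :=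
    psd_trace_mul_re_nonneg hXpP hQ1
  have e1 : ((X * Q).trace).re = (((cfc (fun x : ℝ => max x 0) X) * Q).trace).re
      - (((cfc (fun x : ℝ => max (-x) 0) X) * Q).trace).re := by
    conv_lhs => rw [split_eq hX]
    rw [sub_mul, Matrix.trace_sub, Complex.sub_re]
  have e2 : (((cfc (fun x : ℝ => max x 0) X) * (1 - Q)).trace).re
      = ((cfc (fun x : ℝ => max x 0) X).trace).re
        - (((cfc (fun x : ℝ => max x 0) X) * Q).trace).re := by
    rw [mul_sub, mul_one, Matrix.trace_sub, Complex.sub_re]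
  have e3 : ((X * projPos X).trace).re = ((cfc (fun x : ℝ => max x 0) X).trace).re := by
    rw [mul_projPos_eq hX]
  linarith

lemma trace_expand (ρ σ : Matrix (Fin n) (Fin n) ℂ) (γ : ℝ) (Q : Matrix (Fin n) (Fin n) ℂ) :
    (((ρ - γ • σ) * Q).trace).re = ((ρ * Q).trace).re - γ * ((σ * Q).trace).re := by
  rw [sub_mul, Matrix.trace_sub, Complex.sub_re, Matrix.smul_mul, Matrix.trace_smul]
  congr 1
  simp [Complex.real_smul, Complex.mul_re]


variable {ρ σ : Matrix (Fin n) (Fin n) ℂ} (hρ : ρ.PosSemidef) (hσ : σ.PosSemidef)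
include hρ hσ

lemma herm_sub (γ : ℝ) : (ρ - γ • σ).IsHermitian := hρ.1.sub (herm_smul hσ.1 γ)

lemma g_nonneg (γ : ℝ) : 0 ≤ ((σ * projPos (ρ - γ • σ)).trace).re :=
  psd_trace_mul_re_nonneg hσ (projPos_psd (herm_sub hρ hσ γ))

lemma g_le_one (hσ1 : σ.trace = 1) (γ : ℝ) : ((σ * projPos (ρ - γ • σ)).trace).re ≤ 1 := by
  have h := psd_trace_mul_re_nonneg hσ (one_sub_projPos_psd (herm_sub hρ hσ γ))
  rw [mul_sub, mul_one, Matrix.trace_sub, Complex.sub_re, hσ1, Complex.one_re] at h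
  linarith

lemma g_antitone : Antitone (fun γ : ℝ => ((σ * projPos (ρ - γ • σ)).trace).re) := by
  intro γ₁ γ₂ h12
  rcases eq_or_lt_of_le h12 with rfl | hlt
  · exact le_refl _
  dsimp only
  have key1 := trace_le_trace_projPos (herm_sub hρ hσ γ₂)
    (projPos_psd (herm_sub hρ hσ γ₁)) (one_sub_projPos_psd (herm_sub hρ hσ γ₁))
  have key2 := trace_le_trace_projPos (herm_sub hρ hσ γ₁)
    (projPos_psd (herm_sub hρ hσ γ₂)) (one_sub_projPos_psd (herm_sub hρ hσ γ₂))
  rw [trace_expand, trace_expand] at key1 key2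
  nlinarith [key1, key2, hlt]

lemma g_vanish {t₀ : ℝ} (ht₀ : (t₀ • σ - ρ).PosSemidef) {γ : ℝ} (hγ : t₀ ≤ γ) :
    ((σ * projPos (ρ - γ • σ)).trace).re = 0 := by
  have hpsd : (-(ρ - γ • σ)).PosSemidef := by
    have he : -(ρ - γ • σ) = (t₀ • σ - ρ) + (γ - t₀) • σ := by
      rw [sub_smul]; abel
    rw [he]
    exact ht₀.add (psd_smul hσ (by linarith))
  rw [projPos_zero (herm_sub hρ hσ γ) hpsd]
  simp


omit hρ hσ in
theorem abstract_markov (g : ℝ → ℝ) (hganti : Antitone g) (hg0 : ∀ γ, 0 ≤ g γ)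
    (hg1 : ∀ γ, g γ ≤ 1) (t₀ : ℝ) (hgz : ∀ γ, t₀ ≤ γ → g γ = 0)
    (c : ℝ) (hc0 : 0 < c) (hct₀ : c ≤ t₀)
    (f : ℝ → ℝ) (hconv : ConvexOn ℝ (Set.Ici 0) f) (hmono : MonotoneOn f (Set.Ici 0))
    (hdiff : DifferentiableOn ℝ f (Set.Ici 0)) (hf0 : 0 ≤ f 0) (hfc : 0 < f c) :
    g c ≤ (f 0 + ∫ γ in Set.Ioi (0:ℝ), derivWithin f (Set.Ici 0) γ * g γ) / f c := by
  set F : ℝ → ℝ := fun γ => derivWithin f (Set.Ici 0) γ with hF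
  have ht₀0 : (0:ℝ) < t₀ := lt_of_lt_of_le hc0 hct₀
  -- F is monotone on Ici 0
  have hFmono : MonotoneOn F (Set.Ici 0) := hconv.monotoneOn_derivWithin hdiff
  -- F nonneg on Ici 0
  have hFnn : ∀ x ∈ Set.Ici (0:ℝ), 0 ≤ F x := by
    intro x hx
    have h := ((hdiff x hx).hasDerivWithinAt).mono
      (fun y (hy : y ∈ Set.Ioi x) => Set.mem_Ici.mpr (le_trans (Set.mem_Ici.mp hx) (le_of_lt (Set.mem_Ioi.mp hy))))
    rw [hasDerivWithinAt_iff_tendsto_slope] at h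
    have hne : Set.Ioi x \ {x} = Set.Ioi x :=
      Set.diff_singleton_eq_self (fun hx' => lt_irrefl x hx')
    rw [hne] at h
    refine ge_of_tendsto h ?_
    filter_upwards [self_mem_nhdsWithin] with y hy
    rw [slope_def_field]
    have hxy : x < y := hy
    exact div_nonneg (by
      have := hmono hx (le_trans hx hxy.le) hxy.le
      linarith) (by linarith)
  -- monotone extension of F
  set Fo : ℝ → ℝ := fun γ => F (max γ 0) with hFo
  have hFoMono : Monotone Fo := fun x y hxy =>
    hFmono (Set.mem_Ici.mpr (le_max_right _ _)) (Set.mem_Ici.mpr (le_max_right _ _))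
      (max_le_max hxy (le_refl 0))
  have hFoEq : ∀ γ ∈ Set.Ioi (0:ℝ), Fo γ = F γ := fun γ hγ => by
    simp only [hFo, max_eq_left (le_of_lt (Set.mem_Ioi.mp hγ))]
  have hFonn : ∀ γ, 0 ≤ Fo γ := fun γ => hFnn _ (Set.mem_Ici.mpr (le_max_right _ _))
  -- the product function
  set h : ℝ → ℝ := fun γ => Fo γ * g γ with hh
  have hmeas : Measurable h := (hFoMono.measurable).mul (hganti.measurable)
  -- integrability on Ioc 0 t₀
  have hint : IntegrableOn h (Set.Ioc 0 t₀) := by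
    apply Measure.integrableOn_of_bounded (M := Fo t₀ * 1) measure_Ioc_lt_top.ne
      hmeas.aestronglyMeasurable
    filter_upwards [ae_restrict_mem measurableSet_Ioc] with γ hγ
    rw [Real.norm_eq_abs, abs_of_nonneg (mul_nonneg (hFonn γ) (hg0 γ))]
    exact mul_le_mul (hFoMono (by simpa using hγ.2)) (hg1 γ) (hg0 γ) (hFonn t₀)
  -- the given integrand agrees with h on Ioi 0
  have hcongr : ∀ γ ∈ Set.Ioi (0:ℝ), F γ * g γ = h γ := fun γ hγ => by
    rw [hh]; dsimp only; rw [hFoEq γ hγ]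
  -- integral reduction to Ioc 0 t₀
  have hstep1 : ∫ γ in Set.Ioi (0:ℝ), F γ * g γ = ∫ γ in Set.Ioc (0:ℝ) t₀, h γ := by
    rw [setIntegral_congr_fun measurableSet_Ioi hcongr]
    have hind : Set.EqOn h ((Set.Ioc (0:ℝ) t₀).indicator h) (Set.Ioi 0) := by
      intro γ hγ
      by_cases hle : γ ≤ t₀
      · rw [Set.indicator_of_mem (Set.mem_Ioc.mpr ⟨hγ, hle⟩)]
      · rw [Set.indicator_of_notMem (fun hm => hle hm.2), hh]
        dsimp only
        rw [hgz γ (le_of_not_ge hle), mul_zero]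
    rw [setIntegral_congr_fun measurableSet_Ioi hind,
      setIntegral_indicator measurableSet_Ioc,
      Set.inter_eq_right.mpr (Set.Ioc_subset_Ioi_self)]
  -- FTC on [0, c]
  have hFTC : ∫ γ in (0:ℝ)..c, F γ = f c - f 0 := by
    apply intervalIntegral.integral_eq_sub_of_hasDeriv_right_of_le hc0.le
    · exact (hdiff.continuousOn).mono (fun x hx => hx.1)
    · intro x hx
      exact ((hdiff x hx.1.le).hasDerivWithinAt).mono
        (fun y (hy : y ∈ Set.Ioi x) => Set.mem_Ici.mpr (le_trans hx.1.le (le_of_lt (Set.mem_Ioi.mp hy))))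
    · apply MonotoneOn.intervalIntegrable
      intro x hx y hy hxy
      rw [Set.uIcc_of_le hc0.le] at hx hy
      exact hFmono hx.1 hy.1 hxy
  -- split Ioc 0 t₀ = Ioc 0 c ∪ Ioc c t₀
  have hsplit : ∫ γ in Set.Ioc (0:ℝ) t₀, h γ
      = (∫ γ in Set.Ioc (0:ℝ) c, h γ) + ∫ γ in Set.Ioc c t₀, h γ := by
    rw [← Set.Ioc_union_Ioc_eq_Ioc hc0.le hct₀]
    exact setIntegral_union (Set.Ioc_disjoint_Ioc_of_le le_rfl) measurableSet_Ioc
      (hint.mono_set (Set.Ioc_subset_Ioc_right hct₀))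
      (hint.mono_set (Set.Ioc_subset_Ioc_left hc0.le))
  have htail : 0 ≤ ∫ γ in Set.Ioc c t₀, h γ := by
    apply setIntegral_nonneg measurableSet_Ioc
    exact fun γ _ => mul_nonneg (hFonn γ) (hg0 γ)
  have hhead : (f c - f 0) * g c ≤ ∫ γ in Set.Ioc (0:ℝ) c, h γ := by
    have hFint : IntegrableOn Fo (Set.Ioc (0:ℝ) c) := by
      apply Measure.integrableOn_of_bounded (M := Fo c) measure_Ioc_lt_top.ne
        hFoMono.measurable.aestronglyMeasurable
      filter_upwards [ae_restrict_mem measurableSet_Ioc] with γ hγ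
      rw [Real.norm_eq_abs, abs_of_nonneg (hFonn γ)]
      exact hFoMono hγ.2
    have hle : ∫ γ in Set.Ioc (0:ℝ) c, Fo γ * g c ≤ ∫ γ in Set.Ioc (0:ℝ) c, h γ := by
      apply setIntegral_mono_on (hFint.mul_const _)
        (hint.mono_set (Set.Ioc_subset_Ioc_right hct₀)) measurableSet_Ioc
      intro γ hγ
      exact mul_le_mul_of_nonneg_left (hganti hγ.2) (hFonn γ)
    have heq : ∫ γ in Set.Ioc (0:ℝ) c, Fo γ * g c = (f c - f 0) * g c := by
      rw [integral_mul_const]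
      congr 1
      rw [← hFTC, intervalIntegral.integral_of_le hc0.le]
      exact setIntegral_congr_fun measurableSet_Ioc
        (fun γ hγ => hFoEq γ hγ.1)
    linarith
  -- conclude
  rw [le_div_iff₀ hfc]
  have hgoalrw : ∫ γ in Set.Ioi (0:ℝ), derivWithin f (Set.Ici 0) γ * g γ
      = ∫ γ in Set.Ioi (0:ℝ), F γ * g γ := rfl
  rw [hgoalrw]
  have hI : (f c - f 0) * g c ≤ ∫ γ in Set.Ioi (0:ℝ), F γ * g γ := by
    rw [hstep1, hsplit]; linarith
  nlinarith [hg1 c, hg0 c, hI, hf0]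

end QMIAux

/-- quantum Markov inequality: for density matrices with
`D_max(ρ‖σ) < ∞`, any `0 < c < e^{D_max(ρ‖σ)}` and any convex nondecreasing
differentiable `f` on `[0,∞)` with `f(1) = 0`, `f(0) ≥ 0`, and `f(c) > 0`,
`Tr[σ{ρ > cσ}] ≤ D_f(ρ‖σ)/f(c)` where
`D_f(ρ‖σ) = f(0) + ∫₀^∞ f'(γ) Tr[σ{ρ > γσ}] dγ`. -/
theorem quantum_markov_inequality {n : ℕ} (ρ σ : Matrix (Fin n) (Fin n) ℂ)
    (hρ : ρ.PosSemidef) (hσ : σ.PosSemidef) (hρ1 : ρ.trace = 1) (hσ1 : σ.trace = 1)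
    (hfin : ∃ t : ℝ, (t • σ - ρ).PosSemidef)
    (c : ℝ) (hc0 : 0 < c) (hc : c < Real.exp (Dmax ρ σ))
    (f : ℝ → ℝ) (hconv : ConvexOn ℝ (Set.Ici 0) f) (hmono : MonotoneOn f (Set.Ici 0))
    (hdiff : DifferentiableOn ℝ f (Set.Ici 0)) (hf1 : f 1 = 0) (hf0 : 0 ≤ f 0)
    (hfc : 0 < f c) :
    (Matrix.trace (σ * projPos (ρ - c • σ))).re
      ≤ (f 0 + ∫ γ in Set.Ioi (0:ℝ),
            derivWithin f (Set.Ici 0) γ * (Matrix.trace (σ * projPos (ρ - γ • σ))).re)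
        / f c := by
  obtain ⟨t, ht⟩ := hfin
  have hct₀ : c ≤ max t c := le_max_right _ _
  have ht₀psd : ((max t c) • σ - ρ).PosSemidef := by
    have he : (max t c) • σ - ρ = (t • σ - ρ) + ((max t c) - t) • σ := by
      rw [sub_smul]; abel
    rw [he]
    exact ht.add (QMIAux.psd_smul hσ (by simp [le_max_left]))
  exact QMIAux.abstract_markov (fun γ => ((σ * projPos (ρ - γ • σ)).trace).re)
    (QMIAux.g_antitone hρ hσ) (QMIAux.g_nonneg hρ hσ) (QMIAux.g_le_one hρ hσ hσ1)
    (max t c) (fun γ hγ => QMIAux.g_vanish hρ hσ ht₀psd hγ) c hc0 hct₀ f hconv hmono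
    hdiff hf0 hfc
end
end

section
/- For commuting density matrices ρ = Σ_i λ_i Π_i and σ = Σ_i μ_i Π_i (with common spectral projections Π_i, all μ_i > 0), the Riemann–Stieltjes representation ∫₀^∞ f(γ) d Tr[σ {ρ ≤ γσ}] equals the classical f-divergence Σ_i μ_i f(λ_i/μ_i), for any continuous f : [0,∞) → ℝ. -/
open MeasureTheory Matrix
open scoped ComplexOrder
noncomputable section

section Aux
variable {n : ℕ} {ι : Type} [Fintype ι]

lemma matrix_trace_nonneg_of_psd {A : Matrix (Fin n) (Fin n) ℂ} (hA : A.PosSemidef) :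
    0 ≤ A.trace := by
  rw [Matrix.trace]
  refine Finset.sum_nonneg fun i _ => ?_
  exact hA.diag_nonneg

lemma sum_smul_proj_mul (Pr : ι → Matrix (Fin n) (Fin n) ℂ)
    (hproj : ∀ i, (Pr i)ᴴ = Pr i ∧ Pr i * Pr i = Pr i)
    (horth : ∀ i j, i ≠ j → Pr i * Pr j = 0) (a b : ι → ℂ) :
    (∑ i, a i • Pr i) * (∑ i, b i • Pr i) = ∑ i, (a i * b i) • Pr i := by
  rw [Finset.sum_mul_sum]
  refine Finset.sum_congr rfl fun i _ => ?_
  rw [Finset.sum_eq_single i]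
  · rw [smul_mul_smul_comm, (hproj i).2]
  · intro j _ hj
    rw [smul_mul_smul_comm, horth i j (Ne.symm hj), smul_zero]
  · simp

lemma sum_smul_proj_pow (Pr : ι → Matrix (Fin n) (Fin n) ℂ)
    (hproj : ∀ i, (Pr i)ᴴ = Pr i ∧ Pr i * Pr i = Pr i)
    (horth : ∀ i j, i ≠ j → Pr i * Pr j = 0) (hsum : ∑ i, Pr i = 1)
    (c : ι → ℂ) (k : ℕ) :
    (∑ i, c i • Pr i) ^ k = ∑ i, (c i ^ k) • Pr i := by
  induction k with
  | zero => simp [hsum]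
  | succ k ih =>
    rw [pow_succ, ih, sum_smul_proj_mul Pr hproj horth]
    simp [pow_succ]

lemma sum_smul_proj_aeval (Pr : ι → Matrix (Fin n) (Fin n) ℂ)
    (hproj : ∀ i, (Pr i)ᴴ = Pr i ∧ Pr i * Pr i = Pr i)
    (horth : ∀ i j, i ≠ j → Pr i * Pr j = 0) (hsum : ∑ i, Pr i = 1)
    (c : ι → ℝ) (q : Polynomial ℝ) :
    Polynomial.aeval (∑ i, (c i : ℂ) • Pr i) q
      = ∑ i, ((q.eval (c i) : ℝ) : ℂ) • Pr i := by
  induction q using Polynomial.induction_on' with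
  | add p q hp hq =>
    rw [map_add, hp, hq, ← Finset.sum_add_distrib]
    simp [add_smul, Complex.ofReal_add]
  | monomial k a =>
    rw [Polynomial.aeval_monomial,
      sum_smul_proj_pow Pr hproj horth hsum (fun i => (c i : ℂ)) k]
    rw [Algebra.algebraMap_eq_smul_one, smul_mul_assoc, one_mul, Finset.smul_sum]
    refine Finset.sum_congr rfl fun i _ => ?_
    rw [← smul_assoc, Polynomial.eval_monomial]
    congr 1
    rw [Complex.real_smul]
    push_cast
    ring

lemma selfadj_aux (Pr : ι → Matrix (Fin n) (Fin n) ℂ)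
    (hproj : ∀ i, (Pr i)ᴴ = Pr i ∧ Pr i * Pr i = Pr i) (c : ι → ℝ) :
    IsSelfAdjoint (∑ i, (c i : ℂ) • Pr i) := by
  rw [_root_.IsSelfAdjoint, star_sum]
  refine Finset.sum_congr rfl fun i _ => ?_
  rw [star_smul, Matrix.star_eq_conjTranspose, (hproj i).1, Complex.star_def,
    Complex.conj_ofReal]

lemma spec_aux (Pr : ι → Matrix (Fin n) (Fin n) ℂ)
    (hproj : ∀ i, (Pr i)ᴴ = Pr i ∧ Pr i * Pr i = Pr i)
    (horth : ∀ i j, i ≠ j → Pr i * Pr j = 0) (hsum : ∑ i, Pr i = 1)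
    (c : ι → ℝ) :
    spectrum ℝ (∑ i, (c i : ℂ) • Pr i) ⊆ Set.range c := by
  intro t ht
  by_contra hmem
  rw [spectrum.mem_iff] at ht
  apply ht
  have h1 : algebraMap ℝ (Matrix (Fin n) (Fin n) ℂ) t - (∑ i, (c i : ℂ) • Pr i)
      = ∑ i, ((t - c i : ℝ) : ℂ) • Pr i := by
    rw [IsScalarTower.algebraMap_apply ℝ ℂ, Algebra.algebraMap_eq_smul_one, ← hsum,
      Finset.smul_sum, ← Finset.sum_sub_distrib]
    push_cast
    simp [sub_smul]
  have hne : ∀ i, ((t - c i : ℝ) : ℂ) ≠ 0 := by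
    intro i
    simp only [ne_eq, Complex.ofReal_eq_zero, sub_eq_zero]
    exact fun h => hmem ⟨i, h.symm⟩
  rw [h1]
  refine ⟨⟨∑ i, ((t - c i : ℝ) : ℂ) • Pr i, ∑ i, ((t - c i : ℝ) : ℂ)⁻¹ • Pr i, ?_, ?_⟩, rfl⟩
  · rw [ sum_smul_proj_mul Pr hproj horth]
    rw [← hsum]
    refine Finset.sum_congr rfl fun i _ => ?_
    rw [mul_inv_cancel₀ (hne i), one_smul]
  · rw [sum_smul_proj_mul Pr hproj horth]
    rw [← hsum]
    refine Finset.sum_congr rfl fun i _ => ?_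
    rw [inv_mul_cancel₀ (hne i), one_smul]
lemma cfc_sum_smul_proj (Pr : ι → Matrix (Fin n) (Fin n) ℂ)
    (hproj : ∀ i, (Pr i)ᴴ = Pr i ∧ Pr i * Pr i = Pr i)
    (horth : ∀ i j, i ≠ j → Pr i * Pr j = 0) (hsum : ∑ i, Pr i = 1)
    (c : ι → ℝ) (g : ℝ → ℝ) :
    cfc g (∑ i, (c i : ℂ) • Pr i) = ∑ i, ((g (c i) : ℝ) : ℂ) • Pr i := by
  rcases isEmpty_or_nonempty ι with h|h
  · have h1 : (1 : Matrix (Fin n) (Fin n) ℂ) = 0 := by rw [← hsum]; simp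
    have hz : ∀ M : Matrix (Fin n) (Fin n) ℂ, M = 0 := fun M => by
      calc M = M * 1 := (mul_one M).symm
      _ = 0 := by rw [h1, mul_zero]
    rw [hz (cfc g _)]
    simp
  · set X := ∑ i, (c i : ℂ) • Pr i with hX
    have hsa : _root_.IsSelfAdjoint X := selfadj_aux Pr hproj c
    have hspec := spec_aux Pr hproj horth hsum c
    set s : Finset ℝ := Finset.image c Finset.univ with hs
    set p := Lagrange.interpolate s id g with hp
    have hpc : ∀ i, p.eval (c i) = g (c i) := fun i =>
      Lagrange.eval_interpolate_at_node g (Set.injOn_id _)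
        (Finset.mem_image_of_mem c (Finset.mem_univ i))
    have hcong : cfc g X = cfc p.eval X := cfc_congr fun x hx => by
      obtain ⟨i, rfl⟩ := hspec hx
      exact (hpc i).symm
    rw [hcong, cfc_polynomial p X hsa, sum_smul_proj_aeval Pr hproj horth hsum c p]
    refine Finset.sum_congr rfl fun i _ => by rw [hpc i]

end Aux

/-- for commuting density matrices `ρ = Σ l i • Pr i`, `σ = Σ m i • Pr i`
with common rank-one spectral projections `Pr i` and `m i > 0`, the
Riemann–Stieltjes integral `∫₀^∞ f(γ) d Tr[σ{ρ ≤ γσ}]` (against the Stieltjes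
function that equals `Tr[σ{ρ ≤ γσ}]` for `γ ≥ 0` and `0` for `γ < 0`) equals the
classical f-divergence `Σ m i * f(l i / m i)`, for any continuous `f : [0,∞) → ℝ`. -/
theorem stieltjes_integral_eq_classical_fdiv {n : ℕ} (ρ σ : Matrix (Fin n) (Fin n) ℂ)
    (hρ : ρ.PosSemidef) (hσ : σ.PosSemidef) (hρ1 : ρ.trace = 1) (hσ1 : σ.trace = 1)
    (ι : Type) [Fintype ι] (l m : ι → ℝ) (Pr : ι → Matrix (Fin n) (Fin n) ℂ)
    (hproj : ∀ i, (Pr i)ᴴ = Pr i ∧ Pr i * Pr i = Pr i)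
    (htr : ∀ i, (Pr i).trace = 1)
    (horth : ∀ i j, i ≠ j → Pr i * Pr j = 0)
    (hsum : ∑ i, Pr i = 1)
    (hρeq : ρ = ∑ i, (l i : ℂ) • Pr i)
    (hσeq : σ = ∑ i, (m i : ℂ) • Pr i)
    (hm : ∀ i, 0 < m i)
    (f : ℝ → ℝ) (hf : ContinuousOn f (Set.Ici 0))
    (F : StieltjesFunction ℝ)
    (hF : ∀ γ : ℝ, F γ
      = if 0 ≤ γ then (Matrix.trace (σ * projNonneg (γ • σ - ρ))).re else 0) :
    ∫ γ in Set.Ici (0:ℝ), f γ ∂F.measure = ∑ i, m i * f (l i / m i) := by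

  -- matrix side
  have hl : ∀ i, 0 ≤ l i := by
    intro i
    have hrho : ρ * Pr i = (l i : ℂ) • Pr i := by
      rw [hρeq, Finset.sum_mul, Finset.sum_eq_single i]
      · rw [smul_mul_assoc, (hproj i).2]
      · intro j _ hj
        rw [smul_mul_assoc, horth j i hj, smul_zero]
      · simp
    have h2 : (Pr i)ᴴ * ρ * Pr i = (l i : ℂ) • Pr i := by
      rw [(hproj i).1, mul_assoc, hrho, mul_smul_comm, (hproj i).2]
    have hpsd := hρ.conjTranspose_mul_mul_same (Pr i)
    rw [h2] at hpsd
    have htr' : ((l i : ℂ) • Pr i).trace = (l i : ℂ) := by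
      rw [Matrix.trace_smul, htr i, smul_eq_mul, mul_one]
    have := matrix_trace_nonneg_of_psd hpsd
    rw [htr'] at this
    exact Complex.zero_le_real.mp this
  have hγσρ : ∀ γ : ℝ, γ • σ - ρ = ∑ i, ((γ * m i - l i : ℝ) : ℂ) • Pr i := by
    intro γ
    rw [hρeq, hσeq, Finset.smul_sum, ← Finset.sum_sub_distrib]
    refine Finset.sum_congr rfl fun i _ => ?_
    rw [← smul_assoc, ← sub_smul]
    push_cast
    rw [Complex.real_smul]
  have hFγ : ∀ γ : ℝ, F γ = ∑ i ∈ Finset.univ.filter (fun i => l i / m i ≤ γ), m i := by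
    intro γ
    rw [hF γ]
    have hPN : projNonneg (γ • σ - ρ) =
        ∑ i, (((if 0 ≤ γ * m i - l i then (1:ℝ) else 0) : ℝ) : ℂ) • Pr i := by
      rw [projNonneg, hγσρ γ, cfc_sum_smul_proj Pr hproj horth hsum]
    have hmul : σ * projNonneg (γ • σ - ρ)
        = ∑ i, ((m i : ℂ) * ((if 0 ≤ γ * m i - l i then (1:ℝ) else 0) : ℂ)) • Pr i := by
      rw [hPN, hσeq, sum_smul_proj_mul Pr hproj horth]
      refine Finset.sum_congr rfl fun i _ => ?_
      congr 1
      split <;> simp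
    have htrace : (Matrix.trace (σ * projNonneg (γ • σ - ρ))).re
        = ∑ i, (if l i ≤ γ * m i then m i else 0) := by
      rw [hmul, Matrix.trace_sum]
      rw [Complex.re_sum]
      refine Finset.sum_congr rfl fun i _ => ?_
      rw [Matrix.trace_smul, htr i, smul_eq_mul, mul_one]
      by_cases hc : 0 ≤ γ * m i - l i
      · rw [if_pos hc, if_pos (by linarith)]
        simp
      · rw [if_neg hc, if_neg (by intro h; exact hc (by linarith))]
        simp
    rw [htrace, Finset.sum_filter]
    by_cases hγ : 0 ≤ γ
    · rw [if_pos hγ]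
      refine Finset.sum_congr rfl fun i _ => ?_
      congr 1
      rw [eq_iff_iff, div_le_iff₀ (hm i)]
    · rw [if_neg hγ]
      symm
      refine Finset.sum_eq_zero fun i _ => ?_
      rw [if_neg]
      intro h
      exact hγ (le_trans (div_nonneg (hl i) (hm i).le) h)
  -- measure side
  classical
  set ν : Measure ℝ := ∑ i, ENNReal.ofReal (m i) • Measure.dirac (l i / m i) with hν
  have hdiff : ∀ a b : ℝ, a ≤ b →
      F b - F a = ∑ i, (if l i / m i ∈ Set.Ioc a b then m i else 0) := by
    intro a b hab
    rw [hFγ a, hFγ b, Finset.sum_filter, Finset.sum_filter, ← Finset.sum_sub_distrib]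
    refine Finset.sum_congr rfl fun i _ => ?_
    simp only [Set.mem_Ioc]
    by_cases h1 : l i / m i ≤ a
    · rw [if_pos h1, if_pos (h1.trans hab), if_neg (fun h => absurd h1 (not_le.mpr h.1)),
        sub_self]
    · by_cases h2 : l i / m i ≤ b
      · rw [if_pos h2, if_neg h1, if_pos ⟨lt_of_not_ge h1, h2⟩, sub_zero]
      · rw [if_neg h2, if_neg h1, if_neg (fun h => h2 h.2), sub_zero]
  have hmeas : F.measure = ν := by
    refine MeasureTheory.Measure.ext_of_Ioc F.measure ν fun a b hab => ?_
    rw [StieltjesFunction.measure_Ioc, hdiff a b hab.le,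
      ENNReal.ofReal_sum_of_nonneg (fun i _ => by split <;> simp [(hm i).le]),
      Measure.finset_sum_apply]
    refine Finset.sum_congr rfl fun i _ => ?_
    rw [Measure.smul_apply, Measure.dirac_apply, smul_eq_mul]
    by_cases h : l i / m i ∈ Set.Ioc a b
    · rw [if_pos h, Set.indicator_of_mem h, Pi.one_apply, mul_one]
    · rw [if_neg h, Set.indicator_of_notMem h, mul_zero, ENNReal.ofReal_zero]
  have hres : ν.restrict (Set.Ici 0) = ν := by
    rw [hν, ← Measure.restrictₗ_apply, map_sum]
    refine Finset.sum_congr rfl fun i _ => ?_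
    rw [LinearMap.map_smul, Measure.restrictₗ_apply, MeasureTheory.restrict_dirac,
      if_pos (Set.mem_Ici.mpr (div_nonneg (hl i) (hm i).le))]
  have hint : ∀ i ∈ Finset.univ,
      MeasureTheory.Integrable f (ENNReal.ofReal (m i) • Measure.dirac (l i / m i)) := by
    intro i _
    exact ((MeasureTheory.integrable_const (f (l i / m i))).congr
      (MeasureTheory.ae_eq_dirac f).symm).smul_measure ENNReal.ofReal_ne_top
  rw [hmeas, hres, hν, MeasureTheory.integral_finset_sum_measure hint]
  refine Finset.sum_congr rfl fun i _ => ?_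
  rw [MeasureTheory.integral_smul_measure, MeasureTheory.integral_dirac,
    ENNReal.toReal_ofReal (hm i).le, smul_eq_mul]
end
end

section
/- Let f : [0,∞) → ℝ be convex and differentiable with convex conjugate f*(y) = sup_{x ≥ 0} (xy - f(x)), and let P, Q : [0,∞) → [0,1] be the nondecreasing right-continuous functions P(γ) = Tr[ρ{ρ ≤ γσ}], Q(γ) = Tr[σ{ρ ≤ γσ}] induced by density matrices ρ ≪ σ. Then for every measurable g : [0,∞) → ℝ taking values in the domain of f*, ∫₀^∞ f(γ) dQ(γ) ≥ ∫₀^∞ g(γ) dP(γ) - ∫₀^∞ f*(g(γ)) dQ(γ), with equality for g = f'; i.e., D_f(ρ‖σ) = sup_g { ∫ g dP - ∫ f*∘g dQ }. -/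
open MeasureTheory Matrix
open scoped ComplexOrder
noncomputable section

/-- The convex conjugate `f*(y) = sup_{x ≥ 0} (xy - f x)`. -/
def fenchelConj (f : ℝ → ℝ) (y : ℝ) : ℝ :=
  ⨆ x : {x : ℝ // 0 ≤ x}, ((x : ℝ) * y - f x)

section MatrixAux

variable {n : ℕ}

lemma continuousOn_of_finite (f : ℝ → ℝ) {s : Set ℝ} (hs : s.Finite) : ContinuousOn f s := by
  rw [continuousOn_iff_continuous_restrict]
  haveI : Finite s := hs.to_subtype
  exact continuous_of_discreteTopology

lemma trace_nonneg_of_psd {M : Matrix (Fin n) (Fin n) ℂ} (hM : M.PosSemidef) :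
    0 ≤ M.trace := by
  rw [Matrix.trace]
  apply Finset.sum_nonneg
  intro i _
  have := hM.dotProduct_mulVec_nonneg (Pi.single i 1)
  simpa [dotProduct, Matrix.mulVec, Pi.single_apply] using this

open scoped MatrixOrder in
lemma trace_mul_nonneg {A B : Matrix (Fin n) (Fin n) ℂ} (hA : A.PosSemidef)
    (hB : B.PosSemidef) : 0 ≤ (A * B).trace := by
  have h1 : (A * B).trace = (CFC.sqrt A * B * CFC.sqrt A).trace := by
    rw [Matrix.trace_mul_cycle, Matrix.mul_assoc, ← Matrix.mul_assoc, CFC.sqrt_mul_sqrt_self A hA.nonneg]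
  rw [h1]
  have := hB.mul_mul_conjTranspose_same (CFC.sqrt A)
  rw [(CFC.sqrt_nonneg A).posSemidef.isHermitian.eq] at this
  exact trace_nonneg_of_psd this

lemma trace_mul_re_nonneg_s19 {A B : Matrix (Fin n) (Fin n) ℂ} (hA : A.PosSemidef)
    (hB : B.PosSemidef) : 0 ≤ ((A * B).trace).re :=
  (Complex.le_def.mp (trace_mul_nonneg hA hB)).1

lemma posSemidef_cfc {M : Matrix (Fin n) (Fin n) ℂ} (hM : M.IsHermitian) (f : ℝ → ℝ)
    (hf : ∀ x ∈ spectrum ℝ M, 0 ≤ f x) : (cfc f M).PosSemidef := by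
  rw [hM.cfc_eq]
  unfold Matrix.IsHermitian.cfc
  rw [Unitary.conjStarAlgAut_apply, Matrix.star_eq_conjTranspose]
  apply Matrix.PosSemidef.mul_mul_conjTranspose_same
  apply Matrix.PosSemidef.diagonal
  intro i
  simp only [Function.comp_apply, Pi.zero_apply]
  rw [RCLike.ofReal_nonneg]
  exact hf _ (hM.eigenvalues_mem_spectrum_real i)

lemma spectrum_nonneg_of_psd {M : Matrix (Fin n) (Fin n) ℂ} (hM : M.PosSemidef) :
    ∀ x ∈ spectrum ℝ M, 0 ≤ x := by
  intro x hx
  rw [hM.1.spectrum_real_eq_range_eigenvalues] at hx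
  obtain ⟨i, rfl⟩ := hx
  exact hM.eigenvalues_nonneg i

lemma spectrum_nonpos_of_nsd {M : Matrix (Fin n) (Fin n) ℂ} (hM : (-M).PosSemidef) :
    ∀ x ∈ spectrum ℝ M, x ≤ 0 := by
  intro x hx
  have hx' : -x ∈ spectrum ℝ (-M) := by
    rw [← spectrum.neg_eq]
    exact Set.neg_mem_neg.mpr hx
  have := spectrum_nonneg_of_psd hM _ hx'
  linarith

variable {M : Matrix (Fin n) (Fin n) ℂ}

lemma contOn (f : ℝ → ℝ) : ContinuousOn f (spectrum ℝ M) :=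
  continuousOn_of_finite f M.finite_real_spectrum

lemma projNonneg_posSemidef (hM : M.IsHermitian) : (projNonneg M).PosSemidef :=
  posSemidef_cfc hM _ (fun x _ => by split <;> norm_num)

lemma one_sub_projNonneg_posSemidef (hM : M.IsHermitian) : (1 - projNonneg M).PosSemidef := by
  have h1 : (1 : Matrix (Fin n) (Fin n) ℂ) - projNonneg M
      = cfc (fun x : ℝ => 1 - (if 0 ≤ x then (1:ℝ) else 0)) M := by
    rw [projNonneg, cfc_sub _ _ M (contOn _) (contOn _), cfc_const_one ℝ M hM.isSelfAdjoint]
  rw [h1]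
  exact posSemidef_cfc hM _ (fun x _ => by split <;> norm_num)

lemma mul_projNonneg_eq_posPart (hM : M.IsHermitian) :
    M * projNonneg M = cfc (fun x : ℝ => max x 0) M := by
  rw [projNonneg]
  have h := cfc_mul (p := IsSelfAdjoint) id (fun x : ℝ => if 0 ≤ x then (1:ℝ) else 0) M
    (contOn _) (contOn _)
  rw [cfc_id ℝ M hM.isSelfAdjoint] at h
  rw [← h]
  apply cfc_congr
  intro x _
  by_cases h : 0 ≤ x
  · simp [h, max_eq_left h]
  · simp [h, max_eq_right (le_of_not_ge h)]

lemma posPart_psd (hM : M.IsHermitian) : (cfc (fun x : ℝ => max x 0) M).PosSemidef :=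
  posSemidef_cfc hM _ (fun x _ => le_max_right x 0)

lemma posPart_sub_psd (hM : M.IsHermitian) :
    (cfc (fun x : ℝ => max x 0) M - M).PosSemidef := by
  have h1 := cfc_sub (p := IsSelfAdjoint) (fun x : ℝ => max x 0) id M (contOn _) (contOn _)
  rw [cfc_id ℝ M hM.isSelfAdjoint] at h1
  rw [← h1]
  exact posSemidef_cfc hM _ (fun x _ => by simp [le_max_left])

lemma projNonneg_of_psd (hM : M.PosSemidef) : projNonneg M = 1 := by
  rw [projNonneg]
  have : cfc (fun x : ℝ => if 0 ≤ x then (1:ℝ) else 0) M = cfc (fun _ : ℝ => (1:ℝ)) M :=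
    cfc_congr (fun x hx => if_pos (spectrum_nonneg_of_psd hM x hx))
  rw [this]
  exact cfc_const_one ℝ M hM.1.isSelfAdjoint

lemma posPart_of_nsd (hM : (-M).PosSemidef) : cfc (fun x : ℝ => max x 0) M = 0 := by
  have : cfc (fun x : ℝ => max x 0) M = cfc (fun _ : ℝ => (0:ℝ)) M :=
    cfc_congr (fun x hx => max_eq_right (spectrum_nonpos_of_nsd hM x hx))
  rw [this]
  exact cfc_zero ℝ M

lemma trace_mul_proj_le {N E : Matrix (Fin n) (Fin n) ℂ} (hN : N.IsHermitian)
    (hE : E.PosSemidef) (hE1 : (1 - E).PosSemidef) :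
    ((N * E).trace).re ≤ ((N * projNonneg N).trace).re := by
  rw [mul_projNonneg_eq_posPart hN]
  set Np := cfc (fun x : ℝ => max x 0) N with hNp
  have e1 : Np - N * E = (Np * (1 - E)) + ((Np - N) * E) := by noncomm_ring
  have pos1 := trace_mul_re_nonneg_s19 (posPart_psd hN) hE1
  have pos2 := trace_mul_re_nonneg_s19 (posPart_sub_psd hN) hE
  rw [← hNp] at pos1 pos2
  have e2 : (Np.trace - (N * E).trace).re
      = ((Np * (1 - E)).trace).re + (((Np - N) * E).trace).re := by
    rw [← Matrix.trace_sub, e1, Matrix.trace_add, Complex.add_re]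
  rw [Complex.sub_re] at e2
  linarith

lemma isHermitian_combo (γ : ℝ) {ρ σ : Matrix (Fin n) (Fin n) ℂ}
    (hρ : ρ.IsHermitian) (hσ : σ.IsHermitian) : (γ • σ - ρ).IsHermitian := by
  have h1 : IsSelfAdjoint (γ • σ) := IsSelfAdjoint.smul (star_trivial γ) hσ.isSelfAdjoint
  exact (h1.sub hρ.isSelfAdjoint)

lemma psd_smul {σ : Matrix (Fin n) (Fin n) ℂ} (hσ : σ.PosSemidef) {c : ℝ} (hc : 0 ≤ c) :
    (c • σ).PosSemidef := by
  refine Matrix.PosSemidef.of_dotProduct_mulVec_nonneg ?_ ?_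
  · exact IsSelfAdjoint.smul (star_trivial c) hσ.1.isSelfAdjoint
  · intro x
    rw [Matrix.smul_mulVec, dotProduct_smul]
    have h1 := hσ.dotProduct_mulVec_nonneg x
    rw [show c • (dotProduct (star x) (σ *ᵥ x))
        = (c : ℂ) * (dotProduct (star x) (σ *ᵥ x)) from rfl]
    exact mul_nonneg (by rw [Complex.zero_le_real]; exact hc) h1

lemma trace_lin (γ δ : ℝ) (ρ σ E : Matrix (Fin n) (Fin n) ℂ) :
    (((δ • σ - ρ) * E).trace).re
      = (((γ • σ - ρ) * E).trace).re + (δ - γ) * ((σ * E).trace).re := by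
  have e : δ • σ - ρ = (γ • σ - ρ) + (δ - γ) • σ := by
    rw [sub_smul]; abel
  rw [e, add_mul, Matrix.trace_add, smul_mul_assoc, Matrix.trace_smul, Complex.add_re]
  simp [Complex.real_smul, Complex.mul_re]

lemma trace_splitF (γ : ℝ) (ρ σ E : Matrix (Fin n) (Fin n) ℂ) :
    (((γ • σ - ρ) * E).trace).re
      = γ * ((σ * E).trace).re - ((ρ * E).trace).re := by
  rw [sub_mul, smul_mul_assoc, Matrix.trace_sub, Matrix.trace_smul, Complex.sub_re]
  simp [Complex.real_smul, Complex.mul_re]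

end MatrixAux

section AnalysisAux
open Set
open scoped ENNReal NNReal

lemma stieltjes_FTC (Q : StieltjesFunction ℝ) (F : ℝ → ℝ)
    (hsand : ∀ γ δ : ℝ, 0 ≤ γ → γ ≤ δ → (δ - γ) * Q γ ≤ F δ - F γ ∧ F δ - F γ ≤ (δ - γ) * Q δ)
    (hQ0 : ∀ γ : ℝ, 0 ≤ γ → 0 ≤ Q γ) (hQ1 : ∀ γ : ℝ, 0 ≤ γ → Q γ ≤ 1) :
    ∀ a b : ℝ, 0 ≤ a → a ≤ b → ∫ y in a..b, Q y = F b - F a := by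
  have key2 : ∀ x y : ℝ, 0 ≤ x → x ≤ y → 0 ≤ F y - F x ∧ F y - F x ≤ y - x := by
    intro x y hx hxy
    obtain ⟨h1, h2⟩ := hsand x y hx hxy
    constructor
    · exact le_trans (mul_nonneg (by linarith) (hQ0 x hx)) h1
    · calc F y - F x ≤ (y - x) * Q y := h2
        _ ≤ (y - x) * 1 := by
            exact mul_le_mul_of_nonneg_left (hQ1 y (le_trans hx hxy)) (by linarith)
        _ = y - x := mul_one _
  intro a b ha hab
  apply intervalIntegral.integral_eq_sub_of_hasDeriv_right_of_le hab
  · apply LipschitzOnWith.continuousOn (K := 1) (f := F)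
    rw [lipschitzOnWith_iff_dist_le_mul]
    intro x hx y hy
    simp only [Real.dist_eq, NNReal.coe_one, one_mul]
    rcases le_total x y with h | h
    · obtain ⟨h1, h2⟩ := key2 x y (le_trans ha hx.1) h
      rw [abs_sub_comm (F x), abs_of_nonneg h1, abs_sub_comm x,
        abs_of_nonneg (by linarith : (0:ℝ) ≤ y - x)]
      linarith
    · obtain ⟨h1, h2⟩ := key2 y x (le_trans ha hy.1) h
      rw [abs_of_nonneg h1, abs_of_nonneg (by linarith : (0:ℝ) ≤ x - y)]
      linarith
  · intro x hx
    rw [hasDerivWithinAt_iff_tendsto_slope]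
    have hx0 : (0:ℝ) ≤ x := le_trans ha hx.1.le
    have hset : Ioi x \ {x} = Ioi x := Set.diff_singleton_eq_self (by simp)
    rw [hset]
    have htQ : Filter.Tendsto Q (nhdsWithin x (Ioi x)) (nhds (Q x)) :=
      ((Q.right_continuous x).mono Ioi_subset_Ici_self).tendsto
    apply tendsto_of_tendsto_of_tendsto_of_le_of_le' tendsto_const_nhds htQ
    · apply Filter.eventually_of_mem self_mem_nhdsWithin
      intro δ hδ
      have hδx : x < δ := hδ
      rw [slope_def_field, le_div_iff₀ (by linarith), mul_comm]
      exact (hsand x δ hx0 hδx.le).1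
    · apply Filter.eventually_of_mem self_mem_nhdsWithin
      intro δ hδ
      have hδx : x < δ := hδ
      rw [slope_def_field, div_le_iff₀ (by linarith), mul_comm]
      exact (hsand x δ hx0 hδx.le).2
  · exact (Q.mono.monotoneOn _).intervalIntegrable

lemma key_Ioc (P Q : StieltjesFunction ℝ) (F : ℝ → ℝ)
    (hsand : ∀ γ δ : ℝ, 0 ≤ γ → γ ≤ δ → (δ - γ) * Q γ ≤ F δ - F γ ∧ F δ - F γ ≤ (δ - γ) * Q δ)
    (hPQF : ∀ γ : ℝ, 0 ≤ γ → P γ = γ * Q γ - F γ)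
    (hFTC : ∀ a b : ℝ, 0 ≤ a → a ≤ b → ∫ y in a..b, Q y = F b - F a)
    (a b : ℝ) (ha : 0 ≤ a) (hab : a ≤ b) :
    ∫⁻ γ in Set.Ioc a b, ENNReal.ofReal γ ∂Q.measure = ENNReal.ofReal (P b - P a) := by
  have hb : (0:ℝ) ≤ b := le_trans ha hab
  have layer := lintegral_eq_lintegral_meas_lt (Q.measure.restrict (Set.Ioc a b))
    (f := fun γ => γ)
    ((ae_restrict_iff' measurableSet_Ioc).2 (Filter.Eventually.of_forall
      (fun x hx => le_of_lt (lt_of_le_of_lt ha hx.1))))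
    measurable_id.aemeasurable
  rw [layer]
  have htail : ∀ t : ℝ, (Q.measure.restrict (Set.Ioc a b)) {γ : ℝ | t < γ}
      = ENNReal.ofReal (Q b - Q (max a t)) := by
    intro t
    rw [show {γ : ℝ | t < γ} = Set.Ioi t from rfl, Measure.restrict_apply measurableSet_Ioi]
    have hset : Set.Ioi t ∩ Set.Ioc a b = Set.Ioc (max a t) b := by
      ext γ
      simp only [Set.mem_inter_iff, Set.mem_Ioi, Set.mem_Ioc, max_lt_iff]
      tauto
    rw [hset, Q.measure_Ioc]
  simp_rw [htail]
  have hsplit1 : Set.Ioi (0:ℝ) = Set.Ioc 0 b ∪ Set.Ioi b := (Set.Ioc_union_Ioi_eq_Ioi hb).symm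
  have hsplit2 : Set.Ioc (0:ℝ) b = Set.Ioc 0 a ∪ Set.Ioc a b :=
    (Set.Ioc_union_Ioc_eq_Ioc ha hab).symm
  rw [hsplit1, lintegral_union measurableSet_Ioi (Set.Ioc_disjoint_Ioi le_rfl),
    hsplit2, lintegral_union measurableSet_Ioc (Set.Ioc_disjoint_Ioc_of_le le_rfl)]
  have hQint : IntegrableOn (fun t => (Q t : ℝ)) (Set.Ioc a b) volume := by
    rw [← intervalIntegrable_iff_integrableOn_Ioc_of_le hab]
    exact (Q.mono.monotoneOn _).intervalIntegrable
  have hvol : volume (Set.Ioc a b) < ⊤ := by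
    rw [Real.volume_Ioc]; exact ENNReal.ofReal_lt_top
  have I1 : ∫⁻ t in Set.Ioc 0 a, ENNReal.ofReal (Q b - Q (max a t))
      = ENNReal.ofReal ((Q b - Q a) * a) := by
    rw [setLIntegral_congr_fun measurableSet_Ioc
      (fun t (ht : t ∈ Set.Ioc 0 a) => show ENNReal.ofReal (Q b - Q (max a t))
        = ENNReal.ofReal (Q b - Q a) by rw [max_eq_left ht.2])]
    rw [setLIntegral_const, Real.volume_Ioc, sub_zero, ← ENNReal.ofReal_mul
      (by rw [sub_nonneg]; exact Q.mono hab)]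
  have I2 : ∫⁻ t in Set.Ioc a b, ENNReal.ofReal (Q b - Q (max a t))
      = ENNReal.ofReal ((b - a) * Q b - (F b - F a)) := by
    rw [setLIntegral_congr_fun measurableSet_Ioc
      (fun t (ht : t ∈ Set.Ioc a b) => show ENNReal.ofReal (Q b - Q (max a t))
        = ENNReal.ofReal (Q b - Q t) by rw [max_eq_right ht.1.le])]
    have hint2 : IntegrableOn (fun t => (Q b : ℝ) - Q t) (Set.Ioc a b) volume :=
      (integrableOn_const hvol.ne).sub hQint
    have hnn : 0 ≤ᵐ[volume.restrict (Set.Ioc a b)] (fun t => (Q b : ℝ) - Q t) :=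
      (ae_restrict_iff' measurableSet_Ioc).2 (Filter.Eventually.of_forall
        (fun t ht => sub_nonneg.2 (Q.mono ht.2)))
    rw [← ofReal_integral_eq_lintegral_ofReal hint2 hnn]
    congr 1
    rw [integral_sub (integrableOn_const (C := (Q b : ℝ)) hvol.ne) hQint, setIntegral_const,
      Real.volume_real_Ioc_of_le hab, ← intervalIntegral.integral_of_le hab,
      hFTC a b ha hab, smul_eq_mul]
  have I3 : ∫⁻ t in Set.Ioi b, ENNReal.ofReal (Q b - Q (max a t)) = 0 := by
    have hz : ∀ t ∈ Set.Ioi b, ENNReal.ofReal (Q b - Q (max a t)) = (0:ENNReal) := by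
      intro t ht
      rw [max_eq_right (le_trans hab (le_of_lt ht))]
      exact ENNReal.ofReal_eq_zero.2 (sub_nonpos.2 (Q.mono (le_of_lt ht)))
    rw [setLIntegral_congr_fun measurableSet_Ioi hz]
    simp
  rw [I1, I2, I3, add_zero, ← ENNReal.ofReal_add
    (mul_nonneg (by rw [sub_nonneg]; exact Q.mono hab) ha)
    (by linarith [(hsand a b ha hab).2])]
  congr 1
  have e1 := hPQF a ha
  have e2 := hPQF b hb
  nlinarith [e1, e2]

lemma measure_eq_withDensity (P Q : StieltjesFunction ℝ)
    [IsFiniteMeasure P.measure]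
    (hP0 : P 0 = 0)
    (key : ∀ a b : ℝ, 0 ≤ a → a ≤ b →
      ∫⁻ γ in Ioc a b, ENNReal.ofReal γ ∂Q.measure = ENNReal.ofReal (P b - P a))
    (hPneg : ∀ γ : ℝ, γ < 0 → P γ = 0) :
    P.measure.restrict (Ici 0)
      = (Q.measure.restrict (Ici 0)).withDensity (fun γ => ENNReal.ofReal γ) := by
  apply Measure.ext_of_Iic
  intro t
  rw [Measure.restrict_apply measurableSet_Iic]
  rw [withDensity_apply _ measurableSet_Iic, Measure.restrict_restrict measurableSet_Iic]
  by_cases ht : 0 ≤ t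
  · have hIcc : Iic t ∩ Ici 0 = Icc 0 t := by ext x; simp [mem_Icc, and_comm]
    rw [hIcc]
    have hP0m : P.measure {0} = 0 := by
      have h1 : P.measure {0} ≤ P.measure (Ioc (-1) 0) :=
        measure_mono (by intro x hx; simp only [mem_singleton_iff] at hx; simp [hx])
      rw [P.measure_Ioc, hP0, hPneg (-1) (by norm_num)] at h1
      simpa using h1
    have hsplit : Icc (0:ℝ) t = {0} ∪ Ioc 0 t := by
      ext x
      simp only [mem_Icc, mem_union, mem_singleton_iff, mem_Ioc]
      constructor
      · rintro ⟨h1, h2⟩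
        rcases eq_or_lt_of_le h1 with h | h
        · exact Or.inl h.symm
        · exact Or.inr ⟨h, h2⟩
      · rintro (rfl | ⟨h1, h2⟩)
        · exact ⟨le_rfl, ht⟩
        · exact ⟨h1.le, h2⟩
    have hdisj : Disjoint ({0} : Set ℝ) (Ioc 0 t) := by
      rw [Set.disjoint_left]
      rintro x rfl
      simp
    rw [hsplit, measure_union hdisj measurableSet_Ioc,
      lintegral_union measurableSet_Ioc hdisj, hP0m, zero_add,
      lintegral_singleton, key 0 t le_rfl ht, P.measure_Ioc, hP0, sub_zero]
    simp
  · have hempty : Iic t ∩ Ici 0 = ∅ := by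
      ext x
      simp only [mem_inter_iff, mem_Iic, mem_Ici, mem_empty_iff_false, iff_false, not_and]
      intro h1 h2
      linarith
    rw [hempty]
    simp

lemma stieltjes_finite (P : StieltjesFunction ℝ) (T : ℝ)
    (hPneg : ∀ γ : ℝ, γ < 0 → P γ = 0) (hPT : ∀ γ : ℝ, T ≤ γ → P γ = 1) :
    IsFiniteMeasure P.measure := by
  apply P.isFiniteMeasure (l := 0) (u := 1)
  · apply Filter.Tendsto.congr' _ (tendsto_const_nhds (x := (0:ℝ)))
    exact (Filter.eventually_atBot.2 ⟨-1, fun γ h => (hPneg γ (by linarith)).symm⟩)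
  · apply Filter.Tendsto.congr' _ (tendsto_const_nhds (x := (1:ℝ)))
    exact (Filter.eventually_atTop.2 ⟨T, fun γ h => (hPT γ h).symm⟩)

lemma stieltjes_Ioi_null (P : StieltjesFunction ℝ) (T : ℝ)
    (hPT : ∀ γ : ℝ, T ≤ γ → P γ = 1) : P.measure (Ioi T) = 0 := by
  have hcover : Ioi T = ⋃ n : ℕ, Ioc T (T + (n + 1)) := by
    ext x
    simp only [mem_Ioi, mem_iUnion, mem_Ioc]
    constructor
    · intro hx
      obtain ⟨n, hn⟩ := exists_nat_ge (x - T)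
      exact ⟨n, hx, by linarith⟩
    · rintro ⟨n, hn, -⟩
      exact hn
  have h1 : P.measure (Ioi T) ≤ ∑' n : ℕ, P.measure (Ioc T (T + (n + 1))) := by
    rw [hcover]
    exact measure_iUnion_le _
  have h2 : ∀ n : ℕ, P.measure (Ioc T (T + (n + 1))) = 0 := by
    intro n
    rw [P.measure_Ioc, hPT T le_rfl, hPT _ (by linarith [Nat.cast_nonneg (α := ℝ) n])]
    norm_num
  simp only [h2, tsum_zero] at h1
  exact le_antisymm h1 (zero_le)

lemma restrict_Ici_eq_Icc (Q : StieltjesFunction ℝ) (T : ℝ) (hT : 0 ≤ T)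
    (hnull : Q.measure (Ioi T) = 0) :
    Q.measure.restrict (Ici 0) = Q.measure.restrict (Icc 0 T) := by
  apply Measure.restrict_congr_set
  rw [MeasureTheory.ae_eq_set]
  constructor
  · have : Ici (0:ℝ) \ Icc 0 T = Ioi T := by
      ext x
      simp only [mem_diff, mem_Ici, mem_Icc, mem_Ioi, not_and, not_le]
      constructor
      · rintro ⟨h1, h2⟩; exact h2 h1
      · intro h; exact ⟨by linarith, fun _ => h⟩
    rw [this]; exact hnull
  · rw [Set.diff_eq_empty.2 (fun x hx => hx.1)]
    simp

lemma transfer_integral (P Q : StieltjesFunction ℝ)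
    (heq : P.measure.restrict (Ici 0)
      = (Q.measure.restrict (Ici 0)).withDensity (fun γ => ENNReal.ofReal γ))
    (h : ℝ → ℝ) :
    ∫ γ in Ici (0:ℝ), h γ ∂P.measure = ∫ γ in Ici (0:ℝ), γ * h γ ∂Q.measure := by
  have e1 : ∫ γ in Ici (0:ℝ), h γ ∂P.measure
      = ∫ γ, h γ ∂((Q.measure.restrict (Ici 0)).withDensity (fun γ => ENNReal.ofReal γ)) := by
    rw [← heq]
  rw [e1]
  have hd : (fun γ : ℝ => ENNReal.ofReal γ) = fun γ => ((Real.toNNReal γ : ℝ≥0) : ℝ≥0∞) := rfl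
  rw [hd, integral_withDensity_eq_integral_smul measurable_real_toNNReal]
  apply integral_congr_ae
  refine (ae_restrict_iff' measurableSet_Ici).2 (Filter.Eventually.of_forall fun γ hγ => ?_)
  simp [NNReal.smul_def, Real.coe_toNNReal γ hγ]

lemma transfer_integrable (P Q : StieltjesFunction ℝ)
    (heq : P.measure.restrict (Ici 0)
      = (Q.measure.restrict (Ici 0)).withDensity (fun γ => ENNReal.ofReal γ))
    (h : ℝ → ℝ) :
    Integrable h (P.measure.restrict (Ici 0))
      ↔ Integrable (fun γ => γ * h γ) (Q.measure.restrict (Ici 0)) := by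
  rw [heq]
  have hd : (fun γ : ℝ => ENNReal.ofReal γ) = fun γ => ((Real.toNNReal γ : ℝ≥0) : ℝ≥0∞) := rfl
  rw [hd, integrable_withDensity_iff_integrable_smul measurable_real_toNNReal]
  apply integrable_congr
  refine (ae_restrict_iff' measurableSet_Ici).2 (Filter.Eventually.of_forall fun γ hγ => ?_)
  simp [NNReal.smul_def, Real.coe_toNNReal γ hγ]

variable {f : ℝ → ℝ}

lemma support_line (hconv : ConvexOn ℝ (Set.Ici 0) f) (hdiff : DifferentiableOn ℝ f (Set.Ici 0))
    {γ x : ℝ} (hγ : 0 ≤ γ) (hx : 0 ≤ x) :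
    f γ + derivWithin f (Set.Ici 0) γ * (x - γ) ≤ f x := by
  rcases lt_trichotomy x γ with h | h | h
  · have hs := hconv.slope_le_derivWithin hx hγ h (hdiff γ hγ)
    rw [slope_def_field] at hs
    have hpos : (0:ℝ) < γ - x := by linarith
    rw [div_le_iff₀ hpos] at hs
    nlinarith
  · subst h; simp
  · have hs := hconv.derivWithin_le_slope hγ hx h (hdiff γ hγ)
    rw [slope_def_field] at hs
    have hpos : (0:ℝ) < x - γ := by linarith
    rw [le_div_iff₀ hpos] at hs
    nlinarith

lemma deriv_monotoneOn (hconv : ConvexOn ℝ (Set.Ici 0) f)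
    (hdiff : DifferentiableOn ℝ f (Set.Ici 0)) :
    MonotoneOn (derivWithin f (Set.Ici 0)) (Set.Ici 0) := by
  intro x hx y hy hxy
  rcases eq_or_lt_of_le hxy with rfl | h
  · exact le_rfl
  · have h1 := support_line hconv hdiff hx hy
    have h2 := support_line hconv hdiff hy hx
    nlinarith

lemma fenchel_deriv_eq (hconv : ConvexOn ℝ (Set.Ici 0) f)
    (hdiff : DifferentiableOn ℝ f (Set.Ici 0)) {γ : ℝ} (hγ : 0 ≤ γ) :
    fenchelConj f (derivWithin f (Set.Ici 0) γ) = γ * derivWithin f (Set.Ici 0) γ - f γ := by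
  have hub : ∀ z : {x : ℝ // 0 ≤ x},
      (z : ℝ) * derivWithin f (Set.Ici 0) γ - f z
        ≤ γ * derivWithin f (Set.Ici 0) γ - f γ := by
    rintro ⟨x, hx⟩
    have := support_line hconv hdiff hγ hx
    simp only
    nlinarith
  apply le_antisymm
  · exact ciSup_le hub
  · refine le_ciSup_of_le ⟨γ * derivWithin f (Set.Ici 0) γ - f γ, ?_⟩
      (⟨γ, hγ⟩ : {x : ℝ // 0 ≤ x}) le_rfl
    rintro y ⟨z, rfl⟩
    exact hub z

lemma fenchel_lower {g : ℝ → ℝ} {γ : ℝ} (hγ : 0 ≤ γ)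
    (hbdd : BddAbove (Set.range fun x : {x : ℝ // 0 ≤ x} => (x : ℝ) * g γ - f x)) :
    γ * g γ - f γ ≤ fenchelConj f (g γ) :=
  le_ciSup hbdd (⟨γ, hγ⟩ : {x : ℝ // 0 ≤ x})

end AnalysisAux
open MeasureTheory Matrix
open scoped ComplexOrder

/-- quantum f-divergence duality: with `P(γ) = Tr[ρ{ρ ≤ γσ}]`,
`Q(γ) = Tr[σ{ρ ≤ γσ}]` realized as Stieltjes functions (set to `0` for `γ < 0`),
for every measurable `g` with values in the domain of `f*`,
`∫ f dQ ≥ ∫ g dP - ∫ f*∘g dQ`, with equality for `g = f'`. -/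
theorem quantum_fdivergence_duality {n : ℕ} (ρ σ : Matrix (Fin n) (Fin n) ℂ)
    (hρ : ρ.PosSemidef) (hσ : σ.PosSemidef) (hρ1 : ρ.trace = 1) (hσ1 : σ.trace = 1)
    (hsupp : ∀ x : Fin n → ℂ, σ *ᵥ x = 0 → ρ *ᵥ x = 0)
    (hfin : ∃ t : ℝ, (t • σ - ρ).PosSemidef)
    (f : ℝ → ℝ) (hconv : ConvexOn ℝ (Set.Ici 0) f)
    (hdiff : DifferentiableOn ℝ f (Set.Ici 0))
    (P Q : StieltjesFunction ℝ)
    (hP : ∀ γ : ℝ, P γ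
      = if 0 ≤ γ then (Matrix.trace (ρ * projNonneg (γ • σ - ρ))).re else 0)
    (hQ : ∀ γ : ℝ, Q γ
      = if 0 ≤ γ then (Matrix.trace (σ * projNonneg (γ • σ - ρ))).re else 0) :
    (∀ g : ℝ → ℝ, Measurable g →
      (∀ γ, BddAbove (Set.range fun x : {x : ℝ // 0 ≤ x} => (x : ℝ) * g γ - f x)) →
      MeasureTheory.Integrable g (P.measure.restrict (Set.Ici 0)) →
      MeasureTheory.Integrable (fun γ => fenchelConj f (g γ))
        (Q.measure.restrict (Set.Ici 0)) →
      (∫ γ in Set.Ici (0:ℝ), g γ ∂P.measure)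
          - ∫ γ in Set.Ici (0:ℝ), fenchelConj f (g γ) ∂Q.measure
        ≤ ∫ γ in Set.Ici (0:ℝ), f γ ∂Q.measure) ∧
    (∫ γ in Set.Ici (0:ℝ), f γ ∂Q.measure
      = (∫ γ in Set.Ici (0:ℝ), derivWithin f (Set.Ici 0) γ ∂P.measure)
        - ∫ γ in Set.Ici (0:ℝ), fenchelConj f (derivWithin f (Set.Ici 0) γ) ∂Q.measure) := by
  obtain ⟨t, ht⟩ := hfin
  set T : ℝ := max t 0 with hT
  have hT0 : (0:ℝ) ≤ T := le_max_right t 0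
  have herm : ∀ γ : ℝ, (γ • σ - ρ).IsHermitian := fun γ => isHermitian_combo γ hρ.1 hσ.1
  have hQeq : ∀ γ : ℝ, 0 ≤ γ → (Q γ : ℝ) = ((σ * projNonneg (γ • σ - ρ)).trace).re :=
    fun γ hγ => by rw [hQ γ, if_pos hγ]
  have hPeq : ∀ γ : ℝ, 0 ≤ γ → (P γ : ℝ) = ((ρ * projNonneg (γ • σ - ρ)).trace).re :=
    fun γ hγ => by rw [hP γ, if_pos hγ]
  have hTrQ0 : ∀ γ : ℝ, 0 ≤ ((σ * projNonneg (γ • σ - ρ)).trace).re :=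
    fun γ => trace_mul_re_nonneg_s19 hσ (projNonneg_posSemidef (herm γ))
  have hTrQ1 : ∀ γ : ℝ, ((σ * projNonneg (γ • σ - ρ)).trace).re ≤ 1 := by
    intro γ
    have h1 := trace_mul_re_nonneg_s19 hσ (one_sub_projNonneg_posSemidef (herm γ))
    have h2 : (σ * (1 - projNonneg (γ • σ - ρ))).trace
        = σ.trace - (σ * projNonneg (γ • σ - ρ)).trace := by
      rw [Matrix.mul_sub, Matrix.mul_one, Matrix.trace_sub]
    rw [h2, Complex.sub_re, hσ1, Complex.one_re] at h1
    linarith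
  have hQ0' : ∀ γ : ℝ, 0 ≤ γ → 0 ≤ (Q γ : ℝ) := fun γ hγ => by
    rw [hQeq γ hγ]; exact hTrQ0 γ
  have hQ1' : ∀ γ : ℝ, 0 ≤ γ → (Q γ : ℝ) ≤ 1 := fun γ hγ => by
    rw [hQeq γ hγ]; exact hTrQ1 γ
  have hsand : ∀ γ δ : ℝ, 0 ≤ γ → γ ≤ δ →
      (δ - γ) * Q γ ≤ (((δ • σ - ρ) * projNonneg (δ • σ - ρ)).trace).re
          - (((γ • σ - ρ) * projNonneg (γ • σ - ρ)).trace).re ∧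
      (((δ • σ - ρ) * projNonneg (δ • σ - ρ)).trace).re
          - (((γ • σ - ρ) * projNonneg (γ • σ - ρ)).trace).re ≤ (δ - γ) * Q δ := by
    intro γ δ hγ hδγ
    have hδ : (0:ℝ) ≤ δ := le_trans hγ hδγ
    constructor
    · have hle := trace_mul_proj_le (E := projNonneg (γ • σ - ρ)) (herm δ)
        (projNonneg_posSemidef (herm γ)) (one_sub_projNonneg_posSemidef (herm γ))
      have hlin := trace_lin γ δ ρ σ (projNonneg (γ • σ - ρ))
      rw [hQeq γ hγ]
      linarith
    · have hle := trace_mul_proj_le (E := projNonneg (δ • σ - ρ)) (herm γ)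
        (projNonneg_posSemidef (herm δ)) (one_sub_projNonneg_posSemidef (herm δ))
      have hlin := trace_lin δ γ ρ σ (projNonneg (δ • σ - ρ))
      rw [hQeq δ hδ]
      linarith
  have hPQF : ∀ γ : ℝ, 0 ≤ γ →
      (P γ : ℝ) = γ * Q γ - (((γ • σ - ρ) * projNonneg (γ • σ - ρ)).trace).re := by
    intro γ hγ
    rw [hPeq γ hγ, hQeq γ hγ]
    have := trace_splitF γ ρ σ (projNonneg (γ • σ - ρ))
    linarith
  have hF0 : ((((0:ℝ) • σ - ρ) * projNonneg ((0:ℝ) • σ - ρ)).trace).re = 0 := by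
    rw [mul_projNonneg_eq_posPart (herm 0)]
    rw [posPart_of_nsd (by rw [show -((0:ℝ) • σ - ρ) = ρ by simp]; exact hρ)]
    simp
  have hP0 : (P 0 : ℝ) = 0 := by
    have h1 := hPQF 0 le_rfl
    rw [hF0] at h1
    simpa using h1
  have hpsdT : ∀ γ : ℝ, T ≤ γ → (γ • σ - ρ).PosSemidef := by
    intro γ hγ
    have he : γ • σ - ρ = (t • σ - ρ) + (γ - t) • σ := by rw [sub_smul]; abel
    rw [he]
    exact ht.add (psd_smul hσ (by
      have h1 : t ≤ T := le_max_left t 0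
      linarith))
  have hQT : ∀ γ : ℝ, T ≤ γ → (Q γ : ℝ) = 1 := by
    intro γ hγ
    rw [hQeq γ (le_trans hT0 hγ), projNonneg_of_psd (hpsdT γ hγ), Matrix.mul_one, hσ1,
      Complex.one_re]
  have hPT : ∀ γ : ℝ, T ≤ γ → (P γ : ℝ) = 1 := by
    intro γ hγ
    rw [hPeq γ (le_trans hT0 hγ), projNonneg_of_psd (hpsdT γ hγ), Matrix.mul_one, hρ1,
      Complex.one_re]
  have hPneg : ∀ γ : ℝ, γ < 0 → (P γ : ℝ) = 0 := fun γ hγ => by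
    rw [hP γ, if_neg (not_le.2 hγ)]
  have hQneg : ∀ γ : ℝ, γ < 0 → (Q γ : ℝ) = 0 := fun γ hγ => by
    rw [hQ γ, if_neg (not_le.2 hγ)]
  haveI hPfin : IsFiniteMeasure P.measure := stieltjes_finite P T hPneg hPT
  haveI hQfin : IsFiniteMeasure Q.measure := stieltjes_finite Q T hQneg hQT
  have hFTC := stieltjes_FTC Q
    (fun γ => (((γ • σ - ρ) * projNonneg (γ • σ - ρ)).trace).re) hsand hQ0' hQ1'
  have hkey := key_Ioc P Q
    (fun γ => (((γ • σ - ρ) * projNonneg (γ • σ - ρ)).trace).re) hsand hPQF hFTC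
  have heq := measure_eq_withDensity P Q hP0 hkey hPneg
  have hQnull := stieltjes_Ioi_null Q T hQT
  have hPnull := stieltjes_Ioi_null P T hPT
  have hQrest := restrict_Ici_eq_Icc Q T hT0 hQnull
  have hPrest := restrict_Ici_eq_Icc P T hT0 hPnull
  have hfint : Integrable f (Q.measure.restrict (Set.Ici 0)) := by
    rw [hQrest]
    exact ContinuousOn.integrableOn_compact isCompact_Icc
      ((hdiff.continuousOn).mono Set.Icc_subset_Ici_self)
  have hφmono := deriv_monotoneOn hconv hdiff
  have hφint : Integrable (derivWithin f (Set.Ici 0)) (P.measure.restrict (Set.Ici 0)) := by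
    rw [hPrest]
    have hmeas : AEStronglyMeasurable (derivWithin f (Set.Ici 0))
        (P.measure.restrict (Set.Icc 0 T)) :=
      (aemeasurable_restrict_of_monotoneOn measurableSet_Icc
        (hφmono.mono Set.Icc_subset_Ici_self)).aestronglyMeasurable
    refine Integrable.mono' (integrable_const
      (max |derivWithin f (Set.Ici 0) 0| |derivWithin f (Set.Ici 0) T|)) hmeas ?_
    refine (ae_restrict_iff' measurableSet_Icc).2 (Filter.Eventually.of_forall fun γ hγ => ?_)
    rw [Real.norm_eq_abs]
    exact abs_le_max_abs_abs (hφmono Set.self_mem_Ici hγ.1 hγ.1)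
      (hφmono hγ.1 (Set.mem_Ici.2 hT0) hγ.2)
  have hφQ : Integrable (fun γ => γ * derivWithin f (Set.Ici 0) γ)
      (Q.measure.restrict (Set.Ici 0)) :=
    (transfer_integrable P Q heq _).1 hφint
  constructor
  · intro g hgmeas hbdd hgint hfgint
    have hgQ : Integrable (fun γ => γ * g γ) (Q.measure.restrict (Set.Ici 0)) :=
      (transfer_integrable P Q heq g).1 hgint
    rw [transfer_integral P Q heq g, ← integral_sub hgQ hfgint]
    apply integral_mono_ae (hgQ.sub hfgint) hfint
    refine (ae_restrict_iff' measurableSet_Ici).2 (Filter.Eventually.of_forall fun γ hγ => ?_)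
    have h1 := fenchel_lower (f := f) hγ (hbdd γ)
    show γ * g γ - fenchelConj f (g γ) ≤ f γ
    linarith
  · rw [transfer_integral P Q heq (derivWithin f (Set.Ici 0))]
    have e : ∫ γ in Set.Ici (0:ℝ), fenchelConj f (derivWithin f (Set.Ici 0) γ) ∂Q.measure
        = (∫ γ in Set.Ici (0:ℝ), γ * derivWithin f (Set.Ici 0) γ ∂Q.measure)
          - ∫ γ in Set.Ici (0:ℝ), f γ ∂Q.measure := by
      rw [← integral_sub hφQ hfint]
      apply integral_congr_ae
      refine (ae_restrict_iff' measurableSet_Ici).2 (Filter.Eventually.of_forall fun γ hγ => ?_)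
      exact fenchel_deriv_eq hconv hdiff hγ
    rw [e]
    ring
end
end
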